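/- arXiv:2212.06102 — 6 statements merged into one kernel-verified Lean document; each statement's English description precedes it below -/
import Mathlib

section
/- Suppose p/g : 𝔹_n → 𝔹_N is a rational proper map of balls of degree d written in lowest terms with p(0) = 0 and g(0) = 1. Let r(z,z̄) = |g(z)|² − ‖p(z)‖² and let q be the real polynomial with r(z,z̄) = q(z,z̄)(1 − ‖z‖²). Then g has degree at most d−1, and g(z) = r(z,0) = q(z,0) for all z ∈ ℂⁿ (i.e., g is obtained from r, or from q, by setting the conjugate variables z̄ to zero in their complexifications). -/
open Metric MvPolynomial
open scoped InnerProductSpace ComplexOrder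

noncomputable section

abbrev Cn (n : ℕ) : Type := EuclideanSpace ℂ (Fin n)

noncomputable def evalPoly {n : ℕ} (g : MvPolynomial (Fin n) ℂ) (z : Cn n) : ℂ :=
  MvPolynomial.eval (fun i => z i) g

noncomputable def sqNormP {n N : ℕ} (p : Fin N → MvPolynomial (Fin n) ℂ) (z : Cn n) : ℝ :=
  ∑ j, Complex.normSq (evalPoly (p j) z)

structure RatProperBallMap (n N d : ℕ) : Type where
  p : Fin N → MvPolynomial (Fin n) ℂ
  g : MvPolynomial (Fin n) ℂ
  lowest : ∀ h : MvPolynomial (Fin n) ℂ, h ∣ g → (∀ j, h ∣ p j) → IsUnit h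
  g_ne : ∀ z : Cn n, ‖z‖ < 1 → evalPoly g z ≠ 0
  deg_eq : d = max (Finset.univ.sup fun j => (p j).totalDegree) g.totalDegree
  maps_in : ∀ z : Cn n, ‖z‖ < 1 → sqNormP p z < Complex.normSq (evalPoly g z)
  proper : ∀ z : Cn n, ‖z‖ = 1 → Complex.normSq (evalPoly g z) - sqNormP p z = 0

noncomputable def fval {n N d : ℕ} (F : RatProperBallMap n N d) (z : Cn n) : Cn N :=
  WithLp.toLp 2 (fun j => evalPoly (F.p j) z / evalPoly F.g z)

structure BallAut (m : ℕ) : Type where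
  toFun : Cn m → Cn m
  invFun : Cn m → Cn m
  maps_ball : ∀ z : Cn m, ‖z‖ < 1 → ‖toFun z‖ < 1
  maps_ball' : ∀ z : Cn m, ‖z‖ < 1 → ‖invFun z‖ < 1
  left_inv : ∀ z : Cn m, ‖z‖ < 1 → invFun (toFun z) = z
  right_inv : ∀ z : Cn m, ‖z‖ < 1 → toFun (invFun z) = z
  holo : DifferentiableOn ℂ toFun (ball 0 1)
  holo' : DifferentiableOn ℂ invFun (ball 0 1)

noncomputable def Lambda {n N d : ℕ} (F : RatProperBallMap n N d) (z : Cn n) : ℝ :=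
  (Complex.normSq (evalPoly F.g z) - sqNormP F.p z) / (1 - ‖z‖ ^ 2) ^ d

/-- The complexified underlying form `r(z, z̄) = |g(z)|² − ‖p(z)‖²`, a polynomial in the
variables `z` (the `Sum.inl` block) and `z̄` (the `Sum.inr` block). -/
noncomputable def underlyingForm {n N : ℕ} (p : Fin N → MvPolynomial (Fin n) ℂ)
    (g : MvPolynomial (Fin n) ℂ) : MvPolynomial (Fin n ⊕ Fin n) ℂ :=
  (MvPolynomial.rename Sum.inl g)
      * (MvPolynomial.rename Sum.inr (MvPolynomial.map (starRingEnd ℂ) g))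
    - ∑ j : Fin N, (MvPolynomial.rename Sum.inl (p j))
      * (MvPolynomial.rename Sum.inr (MvPolynomial.map (starRingEnd ℂ) (p j)))

/-- The complexification of `1 − ‖z‖²`. -/
noncomputable def sphereForm (n : ℕ) : MvPolynomial (Fin n ⊕ Fin n) ℂ :=
  1 - ∑ k : Fin n, MvPolynomial.X (Sum.inl k) * MvPolynomial.X (Sum.inr k)


noncomputable section DFHelper

variable {σ : Type*} {R : Type*} [CommRing R]

noncomputable def homT (σ R) [CommRing R] :
    MvPolynomial σ R →ₐ[R] Polynomial (MvPolynomial σ R) :=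
  MvPolynomial.aeval (fun i => Polynomial.C (MvPolynomial.X i) * Polynomial.X)

lemma homT_monomial (m : σ →₀ ℕ) (a : R) :
    homT σ R (monomial m a)
      = Polynomial.C (monomial m a) * Polynomial.X ^ (m.sum fun _ e => e) := by
  rw [homT, aeval_monomial]
  have h1 : (m.prod fun i k => (Polynomial.C (MvPolynomial.X i : MvPolynomial σ R) * Polynomial.X) ^ k)
      = Polynomial.C (m.prod fun i k => (MvPolynomial.X i : MvPolynomial σ R) ^ k)
        * Polynomial.X ^ (m.sum fun _ k => k) := by
    rw [Finsupp.prod, Finsupp.prod, Finsupp.sum, ← Finset.prod_pow_eq_pow_sum, map_prod,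
      ← Finset.prod_mul_distrib]
    exact Finset.prod_congr rfl fun i _ => by rw [mul_pow, Polynomial.C_pow]
  rw [h1, Polynomial.algebraMap_apply, MvPolynomial.algebraMap_eq, ← mul_assoc, ← map_mul,
    ← monomial_eq]

lemma natDegree_homT_le (P : MvPolynomial σ R) :
    (homT σ R P).natDegree ≤ P.totalDegree := by
  conv_lhs => rw [← support_sum_monomial_coeff P]
  rw [map_sum]
  refine Polynomial.natDegree_sum_le_of_forall_le _ _ fun m hm => ?_
  rw [homT_monomial]
  refine le_trans (Polynomial.natDegree_mul_le) ?_
  simp only [Polynomial.natDegree_C, zero_add]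
  exact le_trans (Polynomial.natDegree_X_pow_le _) (le_totalDegree hm)

lemma totalDegree_le_natDegree_homT (P : MvPolynomial σ R) :
    P.totalDegree ≤ (homT σ R P).natDegree := by
  classical
  by_cases hP : P = 0
  · simp [hP]
  obtain ⟨m, hm, hdeg⟩ := Finset.exists_mem_eq_sup P.support (support_nonempty.mpr hP)
    (fun s : σ →₀ ℕ => s.sum fun _ e => e)
  rw [totalDegree, hdeg]
  apply Polynomial.le_natDegree_of_ne_zero
  have key : MvPolynomial.coeff m ((homT σ R P).coeff (m.sum fun _ e => e))
      = MvPolynomial.coeff m P := by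
    conv_lhs => rw [← support_sum_monomial_coeff P, map_sum]
    rw [Polynomial.finset_sum_coeff]
    rw [MvPolynomial.coeff_sum]
    rw [Finset.sum_eq_single m]
    · rw [homT_monomial, Polynomial.coeff_C_mul, Polynomial.coeff_X_pow, if_pos rfl, mul_one,
        MvPolynomial.coeff_monomial, if_pos rfl]
    · intro m' _ hne
      rw [homT_monomial, Polynomial.coeff_C_mul, Polynomial.coeff_X_pow]
      split_ifs with h
      · rw [mul_one, MvPolynomial.coeff_monomial, if_neg hne]
      · rw [mul_zero, MvPolynomial.coeff_zero]
    · intro h; exact absurd hm h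
  intro h0
  rw [h0, MvPolynomial.coeff_zero] at key
  exact (MvPolynomial.mem_support_iff.mp hm) key.symm

lemma eval_aeval' {σ τ : Type*} (z : τ → R) (f : σ → MvPolynomial τ R) (P : MvPolynomial σ R) :
    eval z (MvPolynomial.aeval f P) = eval (fun i => eval z (f i)) P := by
  induction P using MvPolynomial.induction_on with
  | C a => simp
  | add p q hp hq => rw [map_add, map_add, map_add, hp, hq]
  | mul_X p i hp => rw [map_mul, map_mul, map_mul, hp, aeval_X, eval_X]

/-- The substitution `X (inl k) ↦ C (X (inl k)) * T`, `X (inr k) ↦ C (X (inr k))`,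
recording the degree in the `inl` variables as the degree in `T`. -/
noncomputable def psiH (n : ℕ) :
    MvPolynomial (Fin n ⊕ Fin n) ℂ →ₐ[ℂ] Polynomial (MvPolynomial (Fin n ⊕ Fin n) ℂ) :=
  MvPolynomial.aeval (Sum.elim
    (fun k => Polynomial.C (MvPolynomial.X (Sum.inl k)) * Polynomial.X)
    (fun k => Polynomial.C (MvPolynomial.X (Sum.inr k))))

lemma eval_one_psiH {n : ℕ} (P : MvPolynomial (Fin n ⊕ Fin n) ℂ) :
    Polynomial.eval 1 (psiH n P) = P := by
  induction P using MvPolynomial.induction_on with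
  | C a => simp [psiH, MvPolynomial.algebraMap_eq, Polynomial.algebraMap_apply]
  | add p q hp hq => rw [map_add, Polynomial.eval_add, hp, hq]
  | mul_X p i hp =>
      rw [map_mul, Polynomial.eval_mul, hp]
      cases i <;> simp [psiH]

lemma psiH_injective {n : ℕ} {P : MvPolynomial (Fin n ⊕ Fin n) ℂ} (h : psiH n P = 0) : P = 0 := by
  have := eval_one_psiH P
  rw [h] at this
  simpa using this.symm

lemma psiH_rename_inl {n : ℕ} (h : MvPolynomial (Fin n) ℂ) :
    psiH n (rename Sum.inl h)
      = Polynomial.map (↑(rename Sum.inl : MvPolynomial (Fin n) ℂ →ₐ[ℂ] MvPolynomial (Fin n ⊕ Fin n) ℂ))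
        (homT (Fin n) ℂ h) := by
  have key : (psiH n).comp (rename Sum.inl)
      = (Polynomial.mapAlgHom
          (rename Sum.inl : MvPolynomial (Fin n) ℂ →ₐ[ℂ] MvPolynomial (Fin n ⊕ Fin n) ℂ)).comp
        (homT (Fin n) ℂ) := by
    apply MvPolynomial.algHom_ext
    intro i
    simp [psiH, homT, Polynomial.coe_mapAlgHom]
  exact (AlgHom.congr_fun key h).trans (congrFun (Polynomial.coe_mapAlgHom _) _)

lemma psiH_rename_inr {n : ℕ} (h : MvPolynomial (Fin n) ℂ) :
    psiH n (rename Sum.inr h) = Polynomial.C (rename Sum.inr h) := by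
  have key : (psiH n).comp (rename Sum.inr)
      = (Polynomial.CAlgHom (R := ℂ)).comp (rename Sum.inr : MvPolynomial (Fin n) ℂ →ₐ[ℂ] _) := by
    apply MvPolynomial.algHom_ext
    intro i
    simp [psiH, Polynomial.CAlgHom]
  exact (AlgHom.congr_fun key h).trans rfl

end DFHelper


theorem denominator_from_form {n N d : ℕ} (F : RatProperBallMap n N d)
    (hp0 : ∀ j, MvPolynomial.constantCoeff (F.p j) = 0)
    (hg0 : MvPolynomial.constantCoeff F.g = 1)
    (Q : MvPolynomial (Fin n ⊕ Fin n) ℂ)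
    (hQ : underlyingForm F.p F.g = Q * sphereForm n) :
    F.g.totalDegree ≤ d - 1 ∧
    (∀ z : Fin n → ℂ,
      MvPolynomial.eval (Sum.elim z 0) (underlyingForm F.p F.g) = MvPolynomial.eval z F.g) ∧
    (∀ z : Fin n → ℂ,
      MvPolynomial.eval (Sum.elim z 0) Q = MvPolynomial.eval z F.g) := by
  classical
  have hgd : F.g.totalDegree ≤ d :=
    le_of_le_of_eq (le_max_right _ _) F.deg_eq.symm
  have hpd : ∀ j, (F.p j).totalDegree ≤ d := fun j =>
    le_of_le_of_eq (le_trans (Finset.le_sup (f := fun j => (F.p j).totalDegree) (Finset.mem_univ j)) (le_max_left _ _)) F.deg_eq.symm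
  have hker : ∀ z : Fin n → ℂ,
      MvPolynomial.eval (Sum.elim z 0) (underlyingForm F.p F.g) = MvPolynomial.eval z F.g := by
    intro z
    simp only [underlyingForm, map_sub, map_mul, map_sum, eval_rename, Sum.elim_comp_inl,
      Sum.elim_comp_inr, eval_zero, constantCoeff_map, hg0, hp0, map_one, map_zero, mul_one,
      mul_zero, Finset.sum_const_zero, sub_zero]
  have hQev : ∀ z : Fin n → ℂ, MvPolynomial.eval (Sum.elim z 0) Q = MvPolynomial.eval z F.g := by
    intro z
    have h1 := congrArg (MvPolynomial.eval (Sum.elim z (0 : Fin n → ℂ))) hQ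
    have h2 : MvPolynomial.eval (Sum.elim z (0 : Fin n → ℂ)) (sphereForm n) = 1 := by
      simp [sphereForm]
    rw [map_mul, h2, mul_one] at h1
    rw [← h1, hker z]
  refine ⟨?_, hker, hQev⟩
  by_cases hn : n = 0
  · subst hn
    have hg : F.g.totalDegree = 0 := by
      rw [eq_C_of_isEmpty F.g]
      exact totalDegree_C _
    omega
  · have hr0 : underlyingForm F.p F.g ≠ 0 := by
      intro h
      have h1 := hker 0
      rw [h] at h1
      simp only [map_zero, MvPolynomial.eval_zero, hg0] at h1
      exact one_ne_zero h1.symm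
    have hQ0 : Q ≠ 0 := fun h => hr0 (by rw [hQ, h, zero_mul])
    have hψQ0 : psiH n Q ≠ 0 := fun h => hQ0 (psiH_injective h)
    have hc0 : (∑ k : Fin n, (X (Sum.inl k) * X (Sum.inr k) : MvPolynomial (Fin n ⊕ Fin n) ℂ)) ≠ 0 := by
      intro h
      have h1 := congrArg (MvPolynomial.eval (fun _ => (1 : ℂ))) h
      simp only [map_sum, map_mul, eval_X, mul_one, Finset.sum_const, Finset.card_univ,
        Fintype.card_fin, nsmul_eq_mul, map_zero] at h1
      exact hn (by exact_mod_cast h1)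
    have hψS : psiH n (sphereForm n)
        = 1 - Polynomial.C (∑ k : Fin n, (X (Sum.inl k) * X (Sum.inr k)
            : MvPolynomial (Fin n ⊕ Fin n) ℂ)) * Polynomial.X := by
      rw [sphereForm, map_sub, map_one, map_sum, map_sum, Finset.sum_mul]
      congr 1
      refine Finset.sum_congr rfl fun k _ => ?_
      rw [map_mul, map_mul]
      simp only [psiH, aeval_X, Sum.elim_inl, Sum.elim_inr]
      ring
    have hdS : (psiH n (sphereForm n)).natDegree = 1 := by
      rw [hψS]
      apply le_antisymm
      · refine le_trans (Polynomial.natDegree_sub_le _ _) (max_le (by simp) ?_)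
        refine le_trans Polynomial.natDegree_mul_le ?_
        rw [Polynomial.natDegree_C, zero_add]
        exact Polynomial.natDegree_X_le
      · apply Polynomial.le_natDegree_of_ne_zero
        simp only [Polynomial.coeff_sub, Polynomial.coeff_one, Polynomial.coeff_C_mul,
          Polynomial.coeff_X_one, mul_one]
        simpa using hc0
    have hψS0 : psiH n (sphereForm n) ≠ 0 := by
      intro h
      rw [h] at hdS
      simp at hdS
    have hterm : ∀ h : MvPolynomial (Fin n) ℂ, h.totalDegree ≤ d →
        ∀ h₂ : MvPolynomial (Fin n) ℂ,
        (psiH n (rename Sum.inl h * rename Sum.inr h₂)).natDegree ≤ d := by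
      intro h hh h₂
      rw [map_mul, psiH_rename_inl, psiH_rename_inr]
      refine le_trans Polynomial.natDegree_mul_le ?_
      simp only [Polynomial.natDegree_C, add_zero]
      exact le_trans Polynomial.natDegree_map_le (le_trans (natDegree_homT_le h) hh)
    have hψrle : (psiH n (underlyingForm F.p F.g)).natDegree ≤ d := by
      rw [underlyingForm, map_sub, map_sum]
      refine le_trans (Polynomial.natDegree_sub_le _ _) (max_le (hterm _ hgd _) ?_)
      exact Polynomial.natDegree_sum_le_of_forall_le _ _ fun j _ => hterm _ (hpd j) _
    have hmul : (psiH n (underlyingForm F.p F.g)).natDegree = (psiH n Q).natDegree + 1 := by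
      rw [hQ, map_mul, Polynomial.natDegree_mul hψQ0 hψS0, hdS]
    have hQle : (psiH n Q).natDegree + 1 ≤ d := hmul ▸ hψrle
    have hGg : (MvPolynomial.aeval
        (Sum.elim MvPolynomial.X (fun _ => (0 : MvPolynomial (Fin n) ℂ))) Q) = F.g := by
      apply MvPolynomial.funext
      intro z
      rw [eval_aeval']
      have hfun : (fun i : Fin n ⊕ Fin n => MvPolynomial.eval z
          ((Sum.elim (MvPolynomial.X : Fin n → MvPolynomial (Fin n) ℂ)
            (fun _ : Fin n => (0 : MvPolynomial (Fin n) ℂ))) i))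
          = Sum.elim z (0 : Fin n → ℂ) := by
        funext i
        cases i <;> simp
      rw [hfun, hQev z]
    have hkey : homT (Fin n) ℂ (MvPolynomial.aeval
          (Sum.elim MvPolynomial.X (fun _ => (0 : MvPolynomial (Fin n) ℂ))) Q)
        = Polynomial.map
          (↑(MvPolynomial.aeval (Sum.elim MvPolynomial.X (fun _ => (0 : MvPolynomial (Fin n) ℂ)))
            : MvPolynomial (Fin n ⊕ Fin n) ℂ →ₐ[ℂ] MvPolynomial (Fin n) ℂ)) (psiH n Q) := by
      have key : (homT (Fin n) ℂ).comp
            (MvPolynomial.aeval (Sum.elim MvPolynomial.X (fun _ => (0 : MvPolynomial (Fin n) ℂ))))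
          = (Polynomial.mapAlgHom (MvPolynomial.aeval
              (Sum.elim MvPolynomial.X (fun _ => (0 : MvPolynomial (Fin n) ℂ))))).comp (psiH n) := by
        apply MvPolynomial.algHom_ext
        intro i
        cases i <;> simp [homT, psiH, Polynomial.coe_mapAlgHom]
      exact (AlgHom.congr_fun key Q).trans (congrFun (Polynomial.coe_mapAlgHom _) _)
    have hfin : F.g.totalDegree ≤ (psiH n Q).natDegree := by
      rw [← hGg]
      refine le_trans (totalDegree_le_natDegree_homT _) ?_
      rw [hkey]
      exact Polynomial.natDegree_map_le
    omega
end
end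

section
/- Let p : ℂ → ℂᴺ and g : ℂ → ℂ be polynomials with no common root, such that g is nowhere zero on the open unit disc 𝔻, ‖p(z)‖ < |g(z)| for all z ∈ 𝔻, and ‖p(z)‖²/|g(z)|² → 1 as |z| → 1⁻. Then g has no zeros on the closed unit disc; in particular g is nowhere zero on the unit circle. -/
/-- For a rational proper map `p/g` of the unit disc into the unit ball `𝔹_N`, written in lowest
terms, the denominator `g` has no zeros on the closed unit disc. -/
theorem denominator_nonvanishing_closed_disc {N : ℕ}
    (p : Fin N → Polynomial ℂ) (g : Polynomial ℂ)
    (hcoprime : ¬∃ z : ℂ, g.eval z = 0 ∧ ∀ j, (p j).eval z = 0)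
    (hg : ∀ z : ℂ, ‖z‖ < 1 → g.eval z ≠ 0)
    (hmaps : ∀ z : ℂ, ‖z‖ < 1 →
      ∑ j, Complex.normSq ((p j).eval z) < Complex.normSq (g.eval z))
    (hlim : ∀ ε : ℝ, 0 < ε → ∃ δ : ℝ, 0 < δ ∧ ∀ z : ℂ, 1 - δ < ‖z‖ → ‖z‖ < 1 →
      |(∑ j, Complex.normSq ((p j).eval z)) / Complex.normSq (g.eval z) - 1| < ε) :
    ∀ z : ℂ, ‖z‖ ≤ 1 → g.eval z ≠ 0 := by
  intro z₀ hz₀ hg0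
  rcases lt_or_eq_of_le hz₀ with h1 | h1
  · exact hg z₀ h1 hg0
  -- ‖z₀‖ = 1
  obtain ⟨δ, hδ, hδ'⟩ := hlim 1 one_pos
  set H : ℂ → ℝ := fun z => (∑ j, Complex.normSq ((p j).eval z))
      - 2 * Complex.normSq (g.eval z) with hH
  have hcont : Continuous H := by
    apply Continuous.sub
    · exact continuous_finset_sum _ fun j _ =>
        Complex.continuous_normSq.comp (p j).continuous_aeval
    · exact continuous_const.mul (Complex.continuous_normSq.comp g.continuous_aeval)
  set f : ℕ → ℂ := fun n => ((1 - 1/(n+2) : ℝ) : ℂ) * z₀ with hf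
  have hnorm : ∀ n : ℕ, ‖f n‖ = 1 - 1/(n+2 : ℝ) := by
    intro n
    have h2 : (0:ℝ) < 1/(n+2) := by positivity
    have h3 : 1/((n:ℝ)+2) ≤ 1 := by
      rw [div_le_one (by positivity)]; linarith
    rw [hf]
    simp only [norm_mul, Complex.norm_real, Real.norm_eq_abs, h1, mul_one]
    rw [abs_of_nonneg (by linarith)]
  have hlt : ∀ n : ℕ, ‖f n‖ < 1 := by
    intro n; rw [hnorm n]
    have : (0:ℝ) < 1/(n+2) := by positivity
    linarith
  have htend : Filter.Tendsto f Filter.atTop (nhds z₀) := by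
    have h0 : Filter.Tendsto (fun n : ℕ => (1 - 1/(n+2) : ℝ)) Filter.atTop (nhds 1) := by
      have hc := (tendsto_one_div_add_atTop_nhds_zero_nat (𝕜 := ℝ)).comp
        (Filter.tendsto_add_atTop_nat 1)
      have h' : Filter.Tendsto (fun n : ℕ => (1/(n+2) : ℝ)) Filter.atTop (nhds 0) := by
        convert hc using 1
        funext n
        simp only [Function.comp_apply]
        push_cast; ring
      have := h'.const_sub 1
      simpa using this
    have : Filter.Tendsto (fun n : ℕ => ((1 - 1/(n+2) : ℝ) : ℂ)) Filter.atTop (nhds 1) := by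
      exact_mod_cast (Complex.continuous_ofReal.tendsto 1).comp h0
    simpa [hf] using this.mul_const z₀
  -- eventually H (f n) ≤ 0
  have hev : ∀ᶠ n in Filter.atTop, H (f n) ≤ 0 := by
    obtain ⟨M, hM⟩ := exists_nat_gt (1/δ)
    filter_upwards [Filter.eventually_ge_atTop M] with n hn
    have hbig : 1 - δ < ‖f n‖ := by
      rw [hnorm n]
      have hMn : (1/δ : ℝ) < (n:ℝ) + 2 := by
        have : (M:ℝ) ≤ n := by exact_mod_cast hn
        linarith
      have : 1/((n:ℝ)+2) < δ := by
        rw [div_lt_iff₀ (by positivity)]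
        rw [div_lt_iff₀ hδ] at hMn
        linarith [hMn]
      linarith
    have hG : 0 < Complex.normSq (g.eval (f n)) :=
      Complex.normSq_pos.mpr (hg _ (hlt n))
    have := hδ' (f n) hbig (hlt n)
    have h2 : (∑ j, Complex.normSq ((p j).eval (f n))) / Complex.normSq (g.eval (f n)) < 2 := by
      rcases abs_lt.mp this with ⟨_, h⟩; linarith
    rw [div_lt_iff₀ hG] at h2
    simp only [hH]
    linarith
  have hHz : H z₀ ≤ 0 :=
    le_of_tendsto ((hcont.tendsto z₀).comp htend) hev
  have hsum0 : (∑ j, Complex.normSq ((p j).eval z₀)) = 0 := by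
    have hgz : Complex.normSq (g.eval z₀) = 0 := by rw [hg0]; simp
    have hnn : (0:ℝ) ≤ ∑ j, Complex.normSq ((p j).eval z₀) :=
      Finset.sum_nonneg fun j _ => Complex.normSq_nonneg _
    simp only [hH, hgz, mul_zero, sub_zero] at hHz
    linarith
  refine hcoprime ⟨z₀, hg0, fun j => ?_⟩
  have := (Finset.sum_eq_zero_iff_of_nonneg
    (fun j _ => Complex.normSq_nonneg ((p j).eval z₀))).mp hsum0 j (Finset.mem_univ j)
  exact Complex.normSq_eq_zero.mp this
end

section
/- Let B ⊂ ℝⁿ be the open unit ball, let h : closure(B) → ℝ be a C² function that is strictly positive on the closed unit ball, let k ≥ 1 be an integer, and define w : B → ℝ by w(x) = h(x)/(1 − ‖x‖²)^k. Then the least eigenvalue of the Hessian of w tends to +∞ at the boundary: for every M > 0 there exists δ > 0 such that for every x ∈ B with ‖x‖ > 1 − δ and every v ∈ ℝⁿ, vᵀ (Hess w)(x) v ≥ M ‖v‖². -/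
open Metric Set ContinuousLinearMap
open scoped RealInnerProductSpace

section auxhess
variable {E : Type*} [NormedAddCommGroup E] [InnerProductSpace ℝ E]

lemma hasFDerivAt_one_sub_normsq (x : E) :
    HasFDerivAt (fun y : E => (1:ℝ) - ‖y‖^2) ((-2:ℝ) • innerSL ℝ x) x := by
  have h := ((hasStrictFDerivAt_norm_sq x).hasFDerivAt).const_sub (1:ℝ)
  refine h.congr_fderiv ?_
  ext v
  simp

lemma hasFDerivAt_pinv (j : ℕ) {y : E} (hy : (1:ℝ) - ‖y‖^2 ≠ 0) :
    HasFDerivAt (fun x : E => (((1:ℝ) - ‖x‖^2)^(j+1))⁻¹)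
      ((((((1:ℝ) - ‖y‖^2) ^ (j + 1)) ^ 2)⁻¹ * (((j:ℝ) + 1) * ((1:ℝ) - ‖y‖ ^ 2) ^ j * 2)) • innerSL ℝ y) y := by
  have hp := hasFDerivAt_one_sub_normsq y
  have hpow : HasFDerivAt (fun x : E => ((1:ℝ) - ‖x‖^2)^(j+1))
      ((((j:ℝ)+1) * ((1:ℝ) - ‖y‖^2)^j) • ((-2:ℝ) • innerSL ℝ y)) y := by
    have := (hasDerivAt_pow (j+1) ((1:ℝ) - ‖y‖^2)).comp_hasFDerivAt y hp
    simp at this ⊢; exact this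
  have := (hasDerivAt_inv (pow_ne_zero (j+1) hy)).comp_hasFDerivAt y hpow
  simp [smul_smul, Function.comp] at this; exact this

lemma hasFDerivAt_w {h : E → ℝ} {H' : E →L[ℝ] ℝ} (j : ℕ) {y : E}
    (hy : (1:ℝ) - ‖y‖^2 ≠ 0) (hh : HasFDerivAt h H' y) :
    HasFDerivAt (fun x => h x / (1 - ‖x‖^2)^(j+1))
      ((((1:ℝ) - ‖y‖^2)^(j+1))⁻¹ • H'
        + (2 * ((j:ℝ)+1) * h y / ((1:ℝ) - ‖y‖^2)^(j+2)) • (innerSL ℝ y)) y := by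
  have hinv := hasFDerivAt_pinv j hy
  have hmul := hh.mul hinv
  have heq : (fun x : E => h x / (1 - ‖x‖^2)^(j+1)) = fun x => h x * (((1:ℝ) - ‖x‖^2)^(j+1))⁻¹ := by
    funext x; rw [div_eq_mul_inv]
  rw [heq]
  refine hmul.congr_fderiv ?_
  ext v
  simp [smul_smul]
  field_simp
  ring

lemma hessian_apply {h : E → ℝ} (j : ℕ) {x : E} (hx : ‖x‖ < 1)
    (hdiff : ∀ y : E, ‖y‖ < 1 → DifferentiableAt ℝ h y)
    (hh2 : ContDiffAt ℝ 2 h x) (v : E) :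
    fderiv ℝ (fun y => fderiv ℝ (fun x' => h x' / (1 - ‖x'‖ ^ 2) ^ (j+1)) y v) x v =
      (fderiv ℝ (fderiv ℝ h) x v v) / (1 - ‖x‖^2)^(j+1)
      + 4*((j:ℝ)+1) * (fderiv ℝ h x v) * ⟪x, v⟫ / (1-‖x‖^2)^(j+2)
      + 2*((j:ℝ)+1) * h x * ‖v‖^2 / (1-‖x‖^2)^(j+2)
      + 4*((j:ℝ)+1)*((j:ℝ)+2) * h x * ⟪x, v⟫^2 / (1-‖x‖^2)^(j+3) := by
  have hpx : (0:ℝ) < 1 - ‖x‖^2 := by nlinarith [norm_nonneg x]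
  set G : E → ℝ := fun y =>
    (((1:ℝ) - ‖y‖^2)^(j+1))⁻¹ * (fderiv ℝ h y v)
      + (2 * ((j:ℝ)+1) * h y * (((1:ℝ) - ‖y‖^2)^(j+2))⁻¹) * ⟪y, v⟫ with hG
  have hball : {y : E | ‖y‖ < 1} ∈ nhds x := by
    have : IsOpen {y : E | ‖y‖ < 1} := by
      simpa [Metric.ball, dist_eq_norm] using Metric.isOpen_ball (x := (0:E)) (ε := (1:ℝ))
    exact this.mem_nhds (by simpa using hx)
  have hev : (fun y => fderiv ℝ (fun x' => h x' / (1 - ‖x'‖ ^ 2) ^ (j+1)) y v) =ᶠ[nhds x] G := by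
    filter_upwards [hball] with y hy
    have hpy : (0:ℝ) < 1 - ‖y‖^2 := by
      have : ‖y‖ < 1 := hy
      nlinarith [norm_nonneg y]
    have hfd := (hasFDerivAt_w j hpy.ne' ((hdiff y hy).hasFDerivAt)).fderiv
    rw [hfd]
    simp [hG, div_eq_mul_inv]
  have hpne : (1:ℝ) - ‖x‖^2 ≠ 0 := hpx.ne'
  have hD2 : HasFDerivAt (fderiv ℝ h) (fderiv ℝ (fderiv ℝ h) x) x :=
    ((hh2.fderiv_right (le_refl 2)).differentiableAt one_ne_zero).hasFDerivAt
  have hc2 : HasFDerivAt (fun y => fderiv ℝ h y v)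
      ((ContinuousLinearMap.apply ℝ ℝ v).comp (fderiv ℝ (fderiv ℝ h) x)) x :=
    ((ContinuousLinearMap.apply ℝ ℝ v).hasFDerivAt.comp x hD2)
  have hc3 : HasFDerivAt h (fderiv ℝ h x) x := (hh2.differentiableAt two_ne_zero).hasFDerivAt
  have hc4 : HasFDerivAt (fun y : E => ⟪y, v⟫) (innerSL ℝ v) x := by
    have : (fun y : E => ⟪y, v⟫) = fun y => (innerSL ℝ v) y := by
      funext y; simp [real_inner_comm]
    rw [this]
    exact (innerSL ℝ v).hasFDerivAt
  have hinv1 := hasFDerivAt_pinv j hpne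
  have hinv2 := hasFDerivAt_pinv (j+1) hpne
  have HG := ((hinv1.mul hc2).add
    ((((hasFDerivAt_const (2 * ((j:ℝ)+1)) x).mul hc3).mul hinv2).mul hc4))
  have e1 : fderiv ℝ (fun y => fderiv ℝ (fun x' => h x' / (1 - ‖x'‖ ^ 2) ^ (j+1)) y v) x
      = fderiv ℝ G x := hev.fderiv_eq
  rw [e1, HasFDerivAt.fderiv (f := G) HG]
  simp [smul_smul, real_inner_self_eq_norm_sq]
  field_simp
  ring

end auxhess


lemma bound_bilin {E : Type*} [NormedAddCommGroup E] [NormedSpace ℝ E]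
    (f : E →L[ℝ] E →L[ℝ] ℝ) (C : ℝ) (hb : ‖f‖ ≤ C) (v : E) : |f v v| ≤ C * ‖v‖^2 := by
  have h1 : ‖f v v‖ ≤ ‖f v‖ * ‖v‖ := ContinuousLinearMap.le_opNorm _ _
  have h2 : ‖f v‖ ≤ ‖f‖ * ‖v‖ := ContinuousLinearMap.le_opNorm _ _
  rw [← Real.norm_eq_abs]
  nlinarith [norm_nonneg v, norm_nonneg (f v), norm_nonneg f]

lemma bound_lin {E : Type*} [NormedAddCommGroup E] [NormedSpace ℝ E]
    (f : E →L[ℝ] ℝ) (C : ℝ) (hb : ‖f‖ ≤ C) (v : E) : (f v)^2 ≤ C^2 * ‖v‖^2 := by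
  have h1 : ‖f v‖ ≤ ‖f‖ * ‖v‖ := ContinuousLinearMap.le_opNorm _ _
  have h0 : (0:ℝ) ≤ C := le_trans (norm_nonneg f) hb
  have h2 : |f v| ≤ C * ‖v‖ := by
    rw [← Real.norm_eq_abs]; nlinarith [norm_nonneg v, norm_nonneg f]
  nlinarith [abs_nonneg (f v), sq_abs (f v), norm_nonneg v]

lemma bound_inner {E : Type*} [NormedAddCommGroup E] [InnerProductSpace ℝ E]
    {x : E} (hx : ‖x‖ ≤ 1) (v : E) : (⟪x, v⟫ : ℝ)^2 ≤ ‖v‖^2 := by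
  have h1 : |(⟪x, v⟫ : ℝ)| ≤ ‖x‖ * ‖v‖ := abs_real_inner_le_norm x v
  have h2 : (⟪x, v⟫ : ℝ)^2 ≤ (‖x‖ * ‖v‖)^2 := by
    rw [← sq_abs]
    exact pow_le_pow_left₀ (abs_nonneg _) h1 2
  have h3 : ‖x‖^2 * ‖v‖^2 ≤ 1 * ‖v‖^2 := by
    apply mul_le_mul_of_nonneg_right _ (sq_nonneg _)
    nlinarith [norm_nonneg x]
  nlinarith [h2, h3]

lemma final_ineq (j : ℕ) (m C₁ C₂ M p A D t H V : ℝ) (hm : 0 < m)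
    (hC₁ : 0 ≤ C₁) (hC₂ : 0 ≤ C₂) (hM : 0 < M) (hp : 0 < p) (hp1 : p ≤ 1) (hV : 0 ≤ V)
    (hA : |A| ≤ C₂ * V) (hD : D^2 ≤ C₁^2 * V) (ht : t^2 ≤ V) (hH : m ≤ H)
    (hc : (((j:ℝ)+2)*m*C₂ + ((j:ℝ)+1)*C₁^2 + ((j:ℝ)+2)*m*M) * p < 2*((j:ℝ)+1)*((j:ℝ)+2)*m^2) :
    M * V ≤ A / p^(j+1) + 4*((j:ℝ)+1)*D*t/p^(j+2) + 2*((j:ℝ)+1)*H*V/p^(j+2)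
      + 4*((j:ℝ)+1)*((j:ℝ)+2)*H*t^2/p^(j+3) := by
  set J : ℝ := (j:ℝ) with hJdef
  have hJ0 : (0:ℝ) ≤ J := Nat.cast_nonneg j
  have hH0 : 0 < H := lt_of_lt_of_le hm hH
  have hr0 : (0:ℝ) < p^(j+1) := pow_pos hp _
  have hr1 : p^(j+1) ≤ 1 := pow_le_one₀ hp.le hp1
  have hrp0 : (0:ℝ) < p^(j+1) * p^2 := by positivity
  have hRHS : A / p^(j+1) + 4*(J+1)*D*t/p^(j+2) + 2*(J+1)*H*V/p^(j+2)
      + 4*(J+1)*(J+2)*H*t^2/p^(j+3)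
      = (A*p^2 + 4*(J+1)*D*t*p + 2*(J+1)*H*V*p + 4*(J+1)*(J+2)*H*t^2)
        / (p^(j+1) * p^2) := by
    field_simp
    ring
  rw [hRHS, le_div_iff₀ hrp0]
  have key : M * V * p^2 ≤
      A*p^2 + 4*(J+1)*D*t*p + 2*(J+1)*H*V*p + 4*(J+1)*(J+2)*H*t^2 := by
    have hβ0 : (0:ℝ) < (J+2)*m := by positivity
    rw [← mul_le_mul_iff_right₀ hβ0]
    have cross : -(4*(J+2)*m*(D*t*p)) ≤ 4*(J+2)^2*m^2*t^2 + D^2*p^2 := by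
      nlinarith [sq_nonneg (2*(J+2)*m*t + D*p)]
    have b2 : (J+1)*(-(4*(J+2)*m*(D*t*p))) ≤ (J+1)*(4*(J+2)^2*m^2*t^2 + D^2*p^2) :=
      mul_le_mul_of_nonneg_left cross (by positivity)
    have b1 : (-(C₂*V))*(p^2*((J+2)*m)) ≤ A*(p^2*((J+2)*m)) :=
      mul_le_mul_of_nonneg_right (neg_le_of_abs_le hA) (by positivity)
    have b3 : 2*(J+1)*V*p*((J+2)*m)*m ≤ 2*(J+1)*V*p*((J+2)*m)*H :=
      mul_le_mul_of_nonneg_left hH (by positivity)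
    have b4 : 4*(J+1)*(J+2)*t^2*((J+2)*m)*m ≤ 4*(J+1)*(J+2)*t^2*((J+2)*m)*H :=
      mul_le_mul_of_nonneg_left hH (by positivity)
    have b5 : (J+1)*(D^2*p^2) ≤ (J+1)*(C₁^2*V*p^2) :=
      mul_le_mul_of_nonneg_left
        (mul_le_mul_of_nonneg_right hD (sq_nonneg p)) (by positivity)
    have b6 : (((J+2)*m*C₂ + (J+1)*C₁^2 + (J+2)*m*M)*p)*(V*p)
        ≤ (2*(J+1)*(J+2)*m^2)*(V*p) :=
      mul_le_mul_of_nonneg_right hc.le (by positivity)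
    linarith [b1, b2, b3, b4, b5, b6]
  calc M * V * (p^(j+1) * p^2) ≤ M * V * (1 * p^2) := by
        apply mul_le_mul_of_nonneg_left
        · exact mul_le_mul_of_nonneg_right hr1 (sq_nonneg p)
        · positivity
    _ = M * V * p^2 := by ring
    _ ≤ _ := key

/-- If `h` is `C²` and strictly positive on the closed unit ball of `ℝⁿ` and
`w = h / (1 − ‖x‖²)^k`, then the least eigenvalue of the Hessian of `w` tends to `+∞`
at the boundary of the ball. -/
theorem hessian_blowup_near_boundary {n : ℕ} (h : EuclideanSpace ℝ (Fin n) → ℝ)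
    (k : ℕ) (hk : 1 ≤ k)
    (hC2 : ContDiffOn ℝ 2 h (Metric.closedBall 0 1))
    (hpos : ∀ x : EuclideanSpace ℝ (Fin n), ‖x‖ ≤ 1 → 0 < h x) :
    ∀ M : ℝ, 0 < M → ∃ δ : ℝ, 0 < δ ∧
      ∀ x : EuclideanSpace ℝ (Fin n), ‖x‖ < 1 → 1 - δ < ‖x‖ →
        ∀ v : EuclideanSpace ℝ (Fin n),
          M * ‖v‖ ^ 2 ≤
            fderiv ℝ (fun y => fderiv ℝ (fun x' => h x' / (1 - ‖x'‖ ^ 2) ^ k) y v) x v := by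
  obtain ⟨j, rfl⟩ : ∃ j, k = j + 1 := ⟨k - 1, (Nat.succ_pred_eq_of_pos hk).symm⟩
  set s : Set (EuclideanSpace ℝ (Fin n)) := Metric.closedBall 0 1 with hs
  have hcomp : IsCompact s := isCompact_closedBall 0 1
  have hsne : s.Nonempty := ⟨0, by simp [hs]⟩
  have hud : UniqueDiffOn ℝ s := uniqueDiffOn_convex (convex_closedBall 0 1)
    (⟨0, by rw [hs]; exact mem_interior_iff_mem_nhds.2 (Metric.closedBall_mem_nhds 0 one_pos)⟩)
  have hnhds : ∀ x : EuclideanSpace ℝ (Fin n), ‖x‖ < 1 → s ∈ nhds x := by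
    intro x hx
    exact Metric.closedBall_mem_nhds_of_mem (by simpa [mem_ball_zero_iff] using hx)
  have hball : ∀ x : EuclideanSpace ℝ (Fin n), ‖x‖ < 1 →
      Metric.ball (0:EuclideanSpace ℝ (Fin n)) 1 ∈ nhds x := by
    intro x hx
    exact Metric.isOpen_ball.mem_nhds (by simpa [mem_ball_zero_iff] using hx)
  have hC2at : ∀ x : EuclideanSpace ℝ (Fin n), ‖x‖ < 1 → ContDiffAt ℝ 2 h x := by
    intro x hx
    exact (hC2.contDiffWithinAt (by simp [hs, mem_closedBall_zero_iff]; exact hx.le)).contDiffAt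
      (hnhds x hx)
  have hdiff : ∀ y : EuclideanSpace ℝ (Fin n), ‖y‖ < 1 → DifferentiableAt ℝ h y := fun y hy =>
    (hC2at y hy).differentiableAt two_ne_zero
  -- minimum of h
  obtain ⟨y₀, hy₀s, hy₀min⟩ := hcomp.exists_isMinOn hsne (hC2.continuousOn)
  set m : ℝ := h y₀ with hm
  have hm0 : 0 < m := hpos y₀ (by simpa [hs, mem_closedBall_zero_iff] using hy₀s)
  have hmle : ∀ x : EuclideanSpace ℝ (Fin n), ‖x‖ < 1 → m ≤ h x := by
    intro x hx
    exact hy₀min (by simp [hs, mem_closedBall_zero_iff]; exact hx.le)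
  -- bound on first derivative
  have hCD1 : ContDiffOn ℝ 1 (fderivWithin ℝ h s) s := hC2.fderivWithin hud (by norm_num)
  obtain ⟨C₁, hC₁⟩ := hcomp.exists_bound_of_continuousOn hCD1.continuousOn
  have hfd1 : ∀ x : EuclideanSpace ℝ (Fin n), ‖x‖ < 1 → ‖fderiv ℝ h x‖ ≤ C₁ := by
    intro x hx
    rw [← fderivWithin_of_mem_nhds (hnhds x hx)]
    exact hC₁ x (mem_of_mem_nhds (hnhds x hx))
  have hC₁0 : 0 ≤ C₁ := le_trans (norm_nonneg _) (hC₁ y₀ hy₀s)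
  -- bound on second derivative
  have hCD2 : ContDiffOn ℝ 0 (fderivWithin ℝ (fderivWithin ℝ h s) s) s :=
    hCD1.fderivWithin hud (by norm_num)
  obtain ⟨C₂, hC₂⟩ := hcomp.exists_bound_of_continuousOn (f := fderivWithin ℝ (fderivWithin ℝ h s) s) hCD2.continuousOn
  have hC₂0 : 0 ≤ C₂ := le_trans (norm_nonneg _) (hC₂ y₀ hy₀s)
  have hfd2 : ∀ x : EuclideanSpace ℝ (Fin n), ‖x‖ < 1 → ‖fderiv ℝ (fderiv ℝ h) x‖ ≤ C₂ := by
    intro x hx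
    have hev : fderivWithin ℝ h s =ᶠ[nhds x] fderiv ℝ h := by
      filter_upwards [hball x hx] with y hy
      exact fderivWithin_of_mem_nhds (hnhds y (mem_ball_zero_iff.1 hy))
    have e1 : fderiv ℝ (fderiv ℝ h) x = fderivWithin ℝ (fderivWithin ℝ h s) s x := by
      rw [fderivWithin_of_mem_nhds (hnhds x hx)]
      exact (hev.fderiv_eq).symm
    rw [e1]
    exact hC₂ x (mem_of_mem_nhds (hnhds x hx))
  -- choice of δ
  intro M hM
  set J : ℝ := (j:ℝ) with hJ
  have hJ0 : (0:ℝ) ≤ J := Nat.cast_nonneg j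
  set β : ℝ := (J+2)*m with hβ
  have hβ0 : 0 < β := by positivity
  set c3 : ℝ := β*C₂ + (J+1)*C₁^2 + β*M with hc3
  have hc30 : 0 < c3 := by positivity
  set P0 : ℝ := (2*(J+1)*(J+2)*m^2)/c3 with hP0
  have hP00 : 0 < P0 := by positivity
  refine ⟨min 1 P0 / 2, by positivity, ?_⟩
  intro x hx1 hx2 v
  rw [hessian_apply j hx1 hdiff (hC2at x hx1) v]
  have hp0 : (0:ℝ) < 1 - ‖x‖^2 := by nlinarith [norm_nonneg x]
  have hple : 1 - ‖x‖^2 < min 1 P0 := by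
    have h1 : 1 - min 1 P0 / 2 < ‖x‖ := hx2
    nlinarith [norm_nonneg x, sq_nonneg (1 - ‖x‖)]
  have hp1 : 1 - ‖x‖^2 ≤ 1 := le_of_lt (lt_of_lt_of_le hple (min_le_left _ _))
  have hpP0 : c3 * (1 - ‖x‖^2) < 2*(J+1)*(J+2)*m^2 := by
    have h2 := lt_of_lt_of_le hple (min_le_right _ _)
    rw [hP0, lt_div_iff₀ hc30] at h2
    linarith [h2]
  rw [hc3, hβ, hJ] at hpP0
  have := final_ineq j m C₁ C₂ M (1 - ‖x‖^2)
    (fderiv ℝ (fderiv ℝ h) x v v) (fderiv ℝ h x v) (⟪x, v⟫) (h x) (‖v‖^2)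
    hm0 hC₁0 hC₂0 hM hp0 hp1 (sq_nonneg ‖v‖)
    (bound_bilin _ C₂ (hfd2 x hx1) v) (bound_lin _ C₁ (hfd1 x hx1) v)
    (bound_inner hx1.le v) (hmle x hx1) hpP0
  exact this
end

section
/- Let k ≥ 1 and let g(z) = 1 + g₂z² + g₃z³ + ⋯ + g_k z^k be a polynomial in one complex variable with constant term 1 and no linear term (coefficient of z equal to 0), of degree at most k, having no zeros on the closed unit disc {z ∈ ℂ : |z| ≤ 1}. Then |g₂| < k/2, where g₂ is the coefficient of z². -/
open Polynomial

lemma coeff_aux (t : Multiset ℂ) :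
    ((t.map fun a => (1 : ℂ[X]) - C a * X).prod.coeff 0 = 1) ∧
    ((t.map fun a => (1 : ℂ[X]) - C a * X).prod.coeff 1 = -t.sum) ∧
    (2 * (t.map fun a => (1 : ℂ[X]) - C a * X).prod.coeff 2
      = t.sum ^ 2 - (t.map fun a => a ^ 2).sum) := by
  induction t using Multiset.induction with
  | empty => simp [Polynomial.coeff_one]
  | cons a t ih =>
    obtain ⟨h0, h1, h2⟩ := ih
    set q := (t.map fun a => (1 : ℂ[X]) - C a * X).prod with hq
    simp only [Multiset.map_cons, Multiset.prod_cons, Multiset.sum_cons, ← hq]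
    have e : ((1 : ℂ[X]) - C a * X) * q = q - C a * (X * q) := by ring
    have x1 : (X * q).coeff 1 = q.coeff 0 := Polynomial.coeff_X_mul q 0
    have x2 : (X * q).coeff 2 = q.coeff 1 := Polynomial.coeff_X_mul q 1
    have c0 : (((1 : ℂ[X]) - C a * X) * q).coeff 0 = q.coeff 0 := by
      rw [e, Polynomial.coeff_sub, Polynomial.coeff_C_mul, Polynomial.mul_coeff_zero]
      simp
    have c1 : (((1 : ℂ[X]) - C a * X) * q).coeff 1 = q.coeff 1 - a * q.coeff 0 := by
      rw [e, Polynomial.coeff_sub, Polynomial.coeff_C_mul, x1]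
    have c2 : (((1 : ℂ[X]) - C a * X) * q).coeff 2 = q.coeff 2 - a * q.coeff 1 := by
      rw [e, Polynomial.coeff_sub, Polynomial.coeff_C_mul, x2]
    refine ⟨by rw [c0, h0], by rw [c1, h0, h1]; ring, ?_⟩
    rw [c2, mul_sub, h2, h1]
    ring

/-- If `g(z) = 1 + g₂ z² + ⋯ + g_k z^k` is a polynomial with no zeros on the closed unit
disc, then `|g₂| < k/2`. -/
theorem coeff_two_bound (k : ℕ) (hk : 1 ≤ k) (g : Polynomial ℂ)
    (h0 : g.coeff 0 = 1) (h1 : g.coeff 1 = 0) (hdeg : g.natDegree ≤ k)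
    (hz : ∀ z : ℂ, ‖z‖ ≤ 1 → g.eval z ≠ 0) :
    ‖g.coeff 2‖ < (k : ℝ) / 2 := by
  have hsplit : Polynomial.Splits g := IsAlgClosed.splits g
  have hcard : Multiset.card g.roots = g.natDegree := Polynomial.splits_iff_card_roots.mp hsplit
  set s := g.roots with hs
  have hroot : ∀ r ∈ s, 1 < ‖r‖ := by
    intro r hr
    by_contra h
    exact hz r (le_of_not_gt h) ((Polynomial.isRoot_of_mem_roots hr))
  have hne : ∀ r ∈ s, r ≠ 0 := by
    intro r hr h
    have := hroot r hr
    rw [h] at this; norm_num at this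
  have hgfact : g = Polynomial.C g.leadingCoeff * (s.map fun a => X - C a).prod :=
    hsplit.eq_prod_roots
  have heval0 : g.eval 0 = 1 := by rw [← Polynomial.coeff_zero_eq_eval_zero, h0]
  set t : Multiset ℂ := s.map (·⁻¹) with ht
  have hfac : ∀ r ∈ s, (X - C r) = C (-r) * (1 - C r⁻¹ * X) := by
    intro r hr
    have h := hne r hr
    have hrr : (-r) * r⁻¹ = -1 := by field_simp
    rw [mul_sub, mul_one, ← mul_assoc, ← Polynomial.C_mul, hrr]
    simp only [map_neg, map_one]
    ring
  have key : g = (t.map fun a => (1 : ℂ[X]) - C a * X).prod := by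
    have h1' : (s.map fun a => X - C a).prod
        = (s.map fun r => C (-r) * (1 - C r⁻¹ * X)).prod := by
      congr 1
      exact Multiset.map_congr rfl hfac
    have h2' : (s.map fun r => C (-r) * (1 - C r⁻¹ * X)).prod
        = (s.map fun r => C (-r)).prod * (s.map fun r => (1:ℂ[X]) - C r⁻¹ * X).prod := by
      rw [← Multiset.prod_map_mul]
    have h3' : (t.map fun a => (1 : ℂ[X]) - C a * X) = s.map fun r => (1:ℂ[X]) - C r⁻¹ * X := by
      rw [ht, Multiset.map_map]; rfl
    have hCprod : (s.map fun r => C (-r)).prod = C ((s.map fun r => -r).prod) := by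
      rw [eq_comm, map_multiset_prod, Multiset.map_map]
      rfl
    have hscal : g.leadingCoeff * (s.map fun r => -r).prod = 1 := by
      have h' := heval0
      conv_lhs at h' => rw [hgfact]
      rw [Polynomial.eval_mul, Polynomial.eval_C, Polynomial.eval_multiset_prod] at h'
      simp only [Multiset.map_map, Function.comp, Polynomial.eval_sub, Polynomial.eval_X,
        Polynomial.eval_C, zero_sub] at h'
      exact h'
    have hc : Polynomial.C g.leadingCoeff * (s.map fun r => C (-r)).prod = 1 := by
      rw [hCprod, ← Polynomial.C_mul, hscal, Polynomial.C_1]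
    rw [hgfact, h1', h2', ← mul_assoc, hc, one_mul, h3']
  obtain ⟨q0, q1, q2⟩ := coeff_aux t
  rw [← key] at q1 q2
  have hts : t.sum = 0 := by
    rw [h1] at q1; exact (neg_eq_zero.mp q1.symm)
  have h2g : 2 * g.coeff 2 = -(t.map fun a => a ^ 2).sum := by
    rw [q2, hts]; ring
  have habs : ‖(2:ℂ) * g.coeff 2‖ ≤ ((t.map fun a => ‖a‖ ^ 2)).sum := by
    rw [h2g, norm_neg]
    calc ‖(t.map fun a => a ^ 2).sum‖ ≤ ((t.map fun a => a ^ 2).map fun x => ‖x‖).sum :=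
          norm_multiset_sum_le _
      _ = (t.map fun a => ‖a‖ ^ 2).sum := by
          rw [Multiset.map_map]
          congr 1
          refine Multiset.map_congr rfl ?_
          intro x _
          simp [norm_pow]
  have hlt1 : ∀ a ∈ t, ‖a‖ ^ 2 < 1 := by
    intro a hat
    rw [ht] at hat
    obtain ⟨r, hr, rfl⟩ := Multiset.mem_map.mp hat
    have h1r := hroot r hr
    have : ‖r⁻¹‖ < 1 := by
      rw [norm_inv]
      rw [inv_lt_one_iff₀]
      right; exact h1r
    nlinarith [norm_nonneg (r⁻¹)]
  have hsum : ((t.map fun a => ‖a‖ ^ 2)).sum < (k : ℝ) := by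
    rcases eq_or_ne t 0 with h | h
    · rw [h]
      have : (0:ℝ) < k := by exact_mod_cast hk
      simpa
    · obtain ⟨a, ha⟩ := Multiset.exists_mem_of_ne_zero h
      have hlt : ((t.map fun a => ‖a‖ ^ 2)).sum < ((t.map fun _ => (1:ℝ))).sum :=
        Multiset.sum_lt_sum (fun i hi => (hlt1 i hi).le) ⟨a, ha, hlt1 a ha⟩
      have hone : ((t.map fun _ => (1:ℝ))).sum = (Multiset.card t : ℝ) := by
        simp [Multiset.map_const', Multiset.sum_replicate]
      have hcardle : (Multiset.card t : ℝ) ≤ (k : ℝ) := by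
        rw [ht, Multiset.card_map]
        exact_mod_cast hcard ▸ hdeg
      calc ((t.map fun a => ‖a‖ ^ 2)).sum < (Multiset.card t : ℝ) := hone ▸ hlt
        _ ≤ (k : ℝ) := hcardle
  have : ‖(2:ℂ) * g.coeff 2‖ = 2 * ‖g.coeff 2‖ := by
    rw [norm_mul]; norm_num
  rw [this] at habs
  have : ‖g.coeff 2‖ < (k : ℝ) / 2 := by linarith [habs.trans_lt hsum]
  exact this
end

section
/- For every n ≥ 1 there exist an integer N (depending only on n; one may take N + 1 equal to the dimension of the space of polynomials of degree at most 3 in n variables) and a real number ε > 0 such that whenever 0 ≤ σ₁ ≤ σ₂ ≤ ⋯ ≤ σₙ < ε, there exists a polynomial map p : ℂⁿ → ℂᴺ of degree at most 3 with p(0) = 0 such that z ↦ p(z)/(1 + Σ_{k=1}^n σ_k z_k²) is a rational proper map of balls from 𝔹_n to 𝔹_N written in lowest terms. -/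
open Metric MvPolynomial
open scoped InnerProductSpace ComplexOrder

noncomputable section

namespace CubicHelper

open Complex Finset

/-- The pair-expansion of the square of a sum. -/
lemma two_mul_sum_pairs {n : ℕ} (x : Fin n → ℝ) :
    2 * (∑ p ∈ Finset.univ.filter (fun p : Fin n × Fin n => p.1 < p.2), x p.1 * x p.2)
      + ∑ k, x k ^ 2 = (∑ k, x k) ^ 2 := by
  classical
  have hfull : (∑ k, x k) ^ 2 = ∑ p : Fin n × Fin n, x p.1 * x p.2 := by
    rw [sq, Finset.sum_mul_sum]
    exact (Fintype.sum_prod_type (f := fun p : Fin n × Fin n => x p.1 * x p.2)).symm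
  have hsplit :
      (∑ p : Fin n × Fin n, x p.1 * x p.2)
        = (∑ p ∈ Finset.univ.filter (fun p : Fin n × Fin n => p.1 < p.2), x p.1 * x p.2)
          + (∑ p ∈ Finset.univ.filter (fun p : Fin n × Fin n => ¬ p.1 < p.2), x p.1 * x p.2) :=
    (Finset.sum_filter_add_sum_filter_not _ _ _).symm
  have hsplit2 :
      (∑ p ∈ Finset.univ.filter (fun p : Fin n × Fin n => ¬ p.1 < p.2), x p.1 * x p.2)
        = (∑ p ∈ (Finset.univ.filter (fun p : Fin n × Fin n => ¬ p.1 < p.2)).filter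
              (fun p => p.2 < p.1), x p.1 * x p.2)
          + (∑ p ∈ (Finset.univ.filter (fun p : Fin n × Fin n => ¬ p.1 < p.2)).filter
              (fun p => ¬ p.2 < p.1), x p.1 * x p.2) :=
    (Finset.sum_filter_add_sum_filter_not _ _ _).symm
  have hgt :
      (∑ p ∈ (Finset.univ.filter (fun p : Fin n × Fin n => ¬ p.1 < p.2)).filter
          (fun p => p.2 < p.1), x p.1 * x p.2)
        = ∑ p ∈ Finset.univ.filter (fun p : Fin n × Fin n => p.1 < p.2), x p.1 * x p.2 := by
    refine Finset.sum_nbij' (fun p => (p.2, p.1)) (fun p => (p.2, p.1)) ?_ ?_ ?_ ?_ ?_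
    · intro a ha
      simp only [Finset.mem_filter, Finset.mem_univ, true_and] at ha ⊢
      exact ha.2
    · intro a ha
      simp only [Finset.mem_filter, Finset.mem_univ, true_and] at ha ⊢
      exact ⟨not_lt_of_gt ha, ha⟩
    · intro a _; rfl
    · intro a _; rfl
    · intro a _; exact mul_comm _ _
  have heq :
      (∑ p ∈ (Finset.univ.filter (fun p : Fin n × Fin n => ¬ p.1 < p.2)).filter
          (fun p => ¬ p.2 < p.1), x p.1 * x p.2)
        = ∑ k, x k ^ 2 := by
    refine Finset.sum_nbij' (fun p => p.1) (fun k => (k, k)) ?_ ?_ ?_ ?_ ?_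
    · intro a _; exact Finset.mem_univ _
    · intro a _
      simp only [Finset.mem_filter, Finset.mem_univ, true_and]
      exact ⟨lt_irrefl _, lt_irrefl _⟩
    · intro a ha
      simp only [Finset.mem_filter, Finset.mem_univ, true_and] at ha
      have : a.1 = a.2 := le_antisymm (not_lt.mp ha.2) (not_lt.mp ha.1)
      exact Prod.ext rfl this
    · intro a _; rfl
    · intro a ha
      simp only [Finset.mem_filter, Finset.mem_univ, true_and] at ha
      have : a.1 = a.2 := le_antisymm (not_lt.mp ha.2) (not_lt.mp ha.1)
      rw [← this, sq]
  rw [hfull, hsplit, hsplit2, hgt, heq]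
  ring


noncomputable def qpoly (n : ℕ) (σ : Fin n → ℝ) : MvPolynomial (Fin n) ℂ :=
  ∑ k : Fin n, MvPolynomial.C ((σ k : ℂ)) * (MvPolynomial.X k) ^ 2

noncomputable def aR (n : ℕ) : ℝ := Real.sqrt (1 / (2 * n))
noncomputable def bR (n : ℕ) (σ : Fin n → ℝ) (k : Fin n) : ℝ := σ k * Real.sqrt (2 * n)
noncomputable def uR (n : ℕ) (σ : Fin n → ℝ) (k : Fin n) : ℝ :=
  Real.sqrt (1 / 2 - 2 * n * (σ k) ^ 2)

abbrev Idx (n : ℕ) :=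
  (Fin n × Fin n) ⊕ (Fin n ⊕ (({ pr : Fin n × Fin n // pr.1 < pr.2 }) ⊕ Unit))

noncomputable def comp (n : ℕ) (σ : Fin n → ℝ) : Idx n → MvPolynomial (Fin n) ℂ
  | Sum.inl jk => MvPolynomial.C ((aR n : ℂ)) * MvPolynomial.X jk.1
      + MvPolynomial.C ((bR n σ jk.2 : ℂ)) * (MvPolynomial.X jk.2) ^ 2 * MvPolynomial.X jk.1
  | Sum.inr (Sum.inl k) => MvPolynomial.C ((uR n σ k : ℂ)) * (MvPolynomial.X k) ^ 2
  | Sum.inr (Sum.inr (Sum.inl pr)) => MvPolynomial.X pr.val.1 * MvPolynomial.X pr.val.2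
  | Sum.inr (Sum.inr (Sum.inr _)) => qpoly n σ

lemma hab (n : ℕ) (hn : 1 ≤ n) (σ : Fin n → ℝ) (k : Fin n) :
    aR n * bR n σ k = σ k := by
  have hn' : (0:ℝ) < (n:ℝ) := by exact_mod_cast hn
  have h2n : (0:ℝ) < 2 * n := by linarith
  have : aR n * Real.sqrt (2 * n) = 1 := by
    rw [aR, ← Real.sqrt_mul (by positivity)]
    rw [one_div, inv_mul_cancel₀ (ne_of_gt h2n), Real.sqrt_one]
  calc aR n * bR n σ k = σ k * (aR n * Real.sqrt (2 * n)) := by rw [bR]; ring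
    _ = σ k := by rw [this, mul_one]

lemma haA (n : ℕ) (hn : 1 ≤ n) : (n:ℝ) * (aR n) ^ 2 = 1 / 2 := by
  have hn' : (0:ℝ) < (n:ℝ) := by exact_mod_cast hn
  rw [aR, Real.sq_sqrt (by positivity)]
  field_simp

lemma hbsq (n : ℕ) (σ : Fin n → ℝ) (k : Fin n) :
    (bR n σ k) ^ 2 = 2 * n * (σ k) ^ 2 := by
  rw [bR, mul_pow, Real.sq_sqrt (by positivity)]
  ring

lemma husq_nonneg (n : ℕ) (hn : 1 ≤ n) (σ : Fin n → ℝ) (hσ0 : ∀ k, 0 ≤ σ k)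
    (hσε : ∀ k, σ k < 1 / (4 * n)) (k : Fin n) :
    0 < 1 / 2 - 2 * n * (σ k) ^ 2 := by
  have hn' : (1:ℝ) ≤ (n:ℝ) := by exact_mod_cast hn
  have h1 := hσ0 k
  have h2 := hσε k
  have h3 : σ k * (n:ℝ) < 1/4 := by
    rw [lt_div_iff₀ (by linarith : (0:ℝ) < 4 * n)] at h2
    nlinarith
  nlinarith [sq_nonneg (σ k), mul_pos (lt_of_lt_of_le one_pos hn') (lt_of_lt_of_le one_pos hn')]

lemma husq (n : ℕ) (hn : 1 ≤ n) (σ : Fin n → ℝ) (hσ0 : ∀ k, 0 ≤ σ k)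
    (hσε : ∀ k, σ k < 1 / (4 * n)) (k : Fin n) :
    (uR n σ k) ^ 2 = 1 / 2 - 2 * n * (σ k) ^ 2 :=
  Real.sq_sqrt (le_of_lt (husq_nonneg n hn σ hσ0 hσε k))


lemma eval_qpoly (n : ℕ) (σ : Fin n → ℝ) (v : Fin n → ℂ) :
    MvPolynomial.eval v (qpoly n σ) = ∑ k, (σ k : ℂ) * (v k) ^ 2 := by
  rw [qpoly, map_sum]
  refine Finset.sum_congr rfl fun k _ => ?_
  simp [MvPolynomial.eval_mul]

/-- normSq of the evaluated coupling component. -/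
lemma normSq_A (n : ℕ) (hn : 1 ≤ n) (σ : Fin n → ℝ) (v : Fin n → ℂ) (j k : Fin n) :
    Complex.normSq ((aR n : ℂ) * v j + (bR n σ k : ℂ) * (v k) ^ 2 * v j)
      = Complex.normSq (v j) *
          ((aR n) ^ 2 + (bR n σ k) ^ 2 * (Complex.normSq (v k)) ^ 2
            + 2 * σ k * ((v k) ^ 2).re) := by
  have e1 : (aR n : ℂ) * v j + (bR n σ k : ℂ) * (v k) ^ 2 * v j
      = ((aR n : ℂ) + (bR n σ k : ℂ) * (v k) ^ 2) * v j := by ring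
  rw [e1, Complex.normSq_mul, mul_comm]
  congr 1
  rw [Complex.normSq_add]
  have e2 : Complex.normSq ((bR n σ k : ℂ) * (v k) ^ 2)
      = (bR n σ k) ^ 2 * (Complex.normSq (v k)) ^ 2 := by
    rw [Complex.normSq_mul, Complex.normSq_ofReal, map_pow]
    ring
  have e3 : (((aR n : ℂ)) * (starRingEnd ℂ) ((bR n σ k : ℂ) * (v k) ^ 2)).re
      = σ k * ((v k) ^ 2).re := by
    rw [map_mul, Complex.conj_ofReal]
    have e4 : (aR n : ℂ) * ((bR n σ k : ℂ) * (starRingEnd ℂ) ((v k) ^ 2))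
        = ((aR n * bR n σ k : ℝ) : ℂ) * (starRingEnd ℂ) ((v k) ^ 2) := by
      push_cast; ring
    rw [e4, Complex.re_ofReal_mul, hab n hn σ k, Complex.conj_re]
  rw [e2, e3, Complex.normSq_ofReal]
  ring

/-- The total sum of the squared norms of the components. -/
lemma sum_comp (n : ℕ) (hn : 1 ≤ n) (σ : Fin n → ℝ) (hσ0 : ∀ k, 0 ≤ σ k)
    (hσε : ∀ k, σ k < 1 / (4 * n)) (v : Fin n → ℂ) :
    ∑ i : Idx n, Complex.normSq (MvPolynomial.eval v (comp n σ i))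
      = (∑ k, Complex.normSq (v k)) *
          (1 / 2 + (∑ k, 2 * n * (σ k) ^ 2 * (Complex.normSq (v k)) ^ 2)
            + 2 * (∑ k, σ k * ((v k) ^ 2).re))
        + ((∑ k, Complex.normSq (v k)) ^ 2 / 2
            - ∑ k, 2 * n * (σ k) ^ 2 * (Complex.normSq (v k)) ^ 2)
        + Complex.normSq (∑ k, (σ k : ℂ) * (v k) ^ 2) := by
  classical
  set x : Fin n → ℝ := fun k => Complex.normSq (v k) with hx
  set s : ℝ := ∑ k, x k with hs
  set B : ℝ := ∑ k, 2 * n * (σ k) ^ 2 * (x k) ^ 2 with hB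
  set R : ℝ := ∑ k, σ k * ((v k) ^ 2).re with hR
  set P : ℝ := ∑ k, (x k) ^ 2 with hP
  have hsum : ∑ i : Idx n, Complex.normSq (MvPolynomial.eval v (comp n σ i))
      = (∑ jk : Fin n × Fin n, Complex.normSq (MvPolynomial.eval v (comp n σ (Sum.inl jk))))
        + ((∑ k : Fin n, Complex.normSq (MvPolynomial.eval v (comp n σ (Sum.inr (Sum.inl k)))))
          + ((∑ pr : { pr : Fin n × Fin n // pr.1 < pr.2 },
              Complex.normSq (MvPolynomial.eval v (comp n σ (Sum.inr (Sum.inr (Sum.inl pr))))))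
            + (∑ u : Unit,
              Complex.normSq (MvPolynomial.eval v (comp n σ (Sum.inr (Sum.inr (Sum.inr u)))))))) := by
    rw [Fintype.sum_sum_type]
    congr 1
    rw [Fintype.sum_sum_type]
    congr 1
    rw [Fintype.sum_sum_type]
  -- A part
  have hApart : (∑ jk : Fin n × Fin n, Complex.normSq (MvPolynomial.eval v (comp n σ (Sum.inl jk))))
      = s * (1 / 2 + B + 2 * R) := by
    have h1 : ∀ jk : Fin n × Fin n,
        Complex.normSq (MvPolynomial.eval v (comp n σ (Sum.inl jk)))
          = x jk.1 * ((aR n) ^ 2 + (bR n σ jk.2) ^ 2 * (x jk.2) ^ 2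
              + 2 * σ jk.2 * ((v jk.2) ^ 2).re) := by
      intro jk
      have he : MvPolynomial.eval v (comp n σ (Sum.inl jk))
          = (aR n : ℂ) * v jk.1 + (bR n σ jk.2 : ℂ) * (v jk.2) ^ 2 * v jk.1 := by
        simp [comp]
      rw [he, normSq_A n hn σ v jk.1 jk.2]
    calc (∑ jk : Fin n × Fin n, Complex.normSq (MvPolynomial.eval v (comp n σ (Sum.inl jk))))
        = ∑ j : Fin n, ∑ k : Fin n,
            x j * ((aR n) ^ 2 + (bR n σ k) ^ 2 * (x k) ^ 2 + 2 * σ k * ((v k) ^ 2).re) := by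
          rw [Fintype.sum_prod_type]
          exact Finset.sum_congr rfl fun j _ => Finset.sum_congr rfl fun k _ => h1 (j, k)
      _ = (∑ j, x j) * (∑ k, ((aR n) ^ 2 + (bR n σ k) ^ 2 * (x k) ^ 2
              + 2 * σ k * ((v k) ^ 2).re)) := by
          rw [Finset.sum_mul_sum]
      _ = s * (1 / 2 + B + 2 * R) := by
          congr 1
          rw [Finset.sum_add_distrib, Finset.sum_add_distrib]
          rw [Finset.sum_const, Finset.card_univ, Fintype.card_fin, nsmul_eq_mul]
          rw [haA n hn]
          congr 1
          · congr 1
            rw [hB]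
            refine Finset.sum_congr rfl fun k _ => ?_
            rw [hbsq n σ k]
          · rw [hR, Finset.mul_sum]
            refine Finset.sum_congr rfl fun k _ => ?_
            ring
  -- U part
  have hUpart : (∑ k : Fin n, Complex.normSq (MvPolynomial.eval v (comp n σ (Sum.inr (Sum.inl k)))))
      = P / 2 - B := by
    have h1 : ∀ k : Fin n,
        Complex.normSq (MvPolynomial.eval v (comp n σ (Sum.inr (Sum.inl k))))
          = (1 / 2 - 2 * n * (σ k) ^ 2) * (x k) ^ 2 := by
      intro k
      have he : MvPolynomial.eval v (comp n σ (Sum.inr (Sum.inl k)))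
          = (uR n σ k : ℂ) * (v k) ^ 2 := by simp [comp]
      rw [he, Complex.normSq_mul, Complex.normSq_ofReal, map_pow]
      rw [← husq n hn σ hσ0 hσε k]
      ring
    rw [Finset.sum_congr rfl fun k _ => h1 k]
    have h2 : ∀ k : Fin n, (1 / 2 - 2 * (n:ℝ) * σ k ^ 2) * x k ^ 2
        = x k ^ 2 / 2 - 2 * n * σ k ^ 2 * x k ^ 2 := fun k => by ring
    rw [Finset.sum_congr rfl fun k _ => h2 k, Finset.sum_sub_distrib, ← Finset.sum_div]
  -- V part
  have hVpart : (∑ pr : { pr : Fin n × Fin n // pr.1 < pr.2 },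
      Complex.normSq (MvPolynomial.eval v (comp n σ (Sum.inr (Sum.inr (Sum.inl pr))))))
      = (s ^ 2 - P) / 2 := by
    have h1 : ∀ pr : { pr : Fin n × Fin n // pr.1 < pr.2 },
        Complex.normSq (MvPolynomial.eval v (comp n σ (Sum.inr (Sum.inr (Sum.inl pr)))))
          = x pr.val.1 * x pr.val.2 := by
      intro pr
      have he : MvPolynomial.eval v (comp n σ (Sum.inr (Sum.inr (Sum.inl pr))))
          = v pr.val.1 * v pr.val.2 := by simp [comp]
      rw [he, Complex.normSq_mul]
    rw [Finset.sum_congr rfl fun pr _ => h1 pr]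
    have h2 : (∑ pr : { pr : Fin n × Fin n // pr.1 < pr.2 }, x pr.val.1 * x pr.val.2)
        = ∑ p ∈ Finset.univ.filter (fun p : Fin n × Fin n => p.1 < p.2), x p.1 * x p.2 := by
      exact (Finset.sum_subtype (Finset.univ.filter (fun p : Fin n × Fin n => p.1 < p.2))
        (fun p => by simp) (fun p => x p.1 * x p.2)).symm
    rw [h2]
    have h3 := two_mul_sum_pairs x
    rw [← hs, ← hP] at h3
    linarith
  -- W part
  have hWpart : (∑ u : Unit,
      Complex.normSq (MvPolynomial.eval v (comp n σ (Sum.inr (Sum.inr (Sum.inr u))))))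
      = Complex.normSq (∑ k, (σ k : ℂ) * (v k) ^ 2) := by
    rw [Fintype.sum_unique]
    rw [show comp n σ (Sum.inr (Sum.inr (Sum.inr default))) = qpoly n σ from rfl, eval_qpoly]
  rw [hsum, hApart, hUpart, hVpart, hWpart]
  ring


/-- The key identity: `|g|² - Σ|p|² = (1-s)·H`. -/
lemma key_identity (n : ℕ) (hn : 1 ≤ n) (σ : Fin n → ℝ) (hσ0 : ∀ k, 0 ≤ σ k)
    (hσε : ∀ k, σ k < 1 / (4 * n)) (v : Fin n → ℂ) :
    Complex.normSq (MvPolynomial.eval v (1 + qpoly n σ))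
        - ∑ i : Idx n, Complex.normSq (MvPolynomial.eval v (comp n σ i))
      = (1 - ∑ k, Complex.normSq (v k)) *
          (1 + (∑ k, Complex.normSq (v k)) / 2
            + 2 * (∑ k, σ k * ((v k) ^ 2).re)
            + ∑ k, 2 * n * (σ k) ^ 2 * (Complex.normSq (v k)) ^ 2) := by
  have hg : MvPolynomial.eval v (1 + qpoly n σ) = 1 + ∑ k, (σ k : ℂ) * (v k) ^ 2 := by
    rw [map_add, map_one, eval_qpoly]
  have hq : Complex.normSq (1 + ∑ k, (σ k : ℂ) * (v k) ^ 2)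
      = 1 + 2 * (∑ k, σ k * ((v k) ^ 2).re)
        + Complex.normSq (∑ k, (σ k : ℂ) * (v k) ^ 2) := by
    rw [Complex.normSq_add]
    have h1 : ((1:ℂ) * (starRingEnd ℂ) (∑ k, (σ k : ℂ) * (v k) ^ 2)).re
        = ∑ k, σ k * ((v k) ^ 2).re := by
      rw [one_mul]
      rw [map_sum, Complex.re_sum]
      refine Finset.sum_congr rfl fun k _ => ?_
      rw [map_mul, Complex.conj_ofReal, Complex.re_ofReal_mul, Complex.conj_re]
    rw [h1, Complex.normSq_one]
    ring
  rw [hg, hq, sum_comp n hn σ hσ0 hσε v]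
  ring

/-- Lower bound for the factor `H`. -/
lemma H_ge_one (n : ℕ) (hn : 1 ≤ n) (σ : Fin n → ℝ) (hσ0 : ∀ k, 0 ≤ σ k)
    (hσε : ∀ k, σ k < 1 / (4 * n)) (v : Fin n → ℂ) :
    1 ≤ 1 + (∑ k, Complex.normSq (v k)) / 2
          + 2 * (∑ k, σ k * ((v k) ^ 2).re)
          + ∑ k, 2 * n * (σ k) ^ 2 * (Complex.normSq (v k)) ^ 2 := by
  have hn' : (1:ℝ) ≤ (n:ℝ) := by exact_mod_cast hn
  have hB : 0 ≤ ∑ k, 2 * (n:ℝ) * (σ k) ^ 2 * (Complex.normSq (v k)) ^ 2 := by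
    refine Finset.sum_nonneg fun k _ => ?_
    positivity
  have hRk : ∀ k : Fin n, -(σ k * Complex.normSq (v k)) ≤ σ k * ((v k) ^ 2).re := by
    intro k
    have h1 : -(‖(v k) ^ 2‖) ≤ ((v k) ^ 2).re :=
      neg_le_of_abs_le (Complex.abs_re_le_norm _)
    have h2 : ‖(v k) ^ 2‖ = Complex.normSq (v k) := by
      rw [norm_pow, Complex.sq_norm]
    rw [h2] at h1
    have := mul_le_mul_of_nonneg_left h1 (hσ0 k)
    linarith [this]
  have hR : -(∑ k, σ k * Complex.normSq (v k)) ≤ ∑ k, σ k * ((v k) ^ 2).re := by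
    rw [← Finset.sum_neg_distrib]
    exact Finset.sum_le_sum fun k _ => hRk k
  have hs4 : ∑ k, σ k * Complex.normSq (v k)
      ≤ (∑ k, Complex.normSq (v k)) / 4 := by
    have h1 : ∀ k : Fin n, σ k * Complex.normSq (v k) ≤ Complex.normSq (v k) / 4 := by
      intro k
      have h2 : σ k ≤ 1 / 4 := by
        have := hσε k
        have h3 : 1 / (4 * (n:ℝ)) ≤ 1 / 4 := by
          apply div_le_div_of_nonneg_left (by norm_num) (by norm_num) ?_
          linarith
        linarith
      have := mul_le_mul_of_nonneg_right h2 (Complex.normSq_nonneg (v k))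
      linarith
    calc ∑ k, σ k * Complex.normSq (v k) ≤ ∑ k, Complex.normSq (v k) / 4 :=
          Finset.sum_le_sum fun k _ => h1 k
      _ = (∑ k, Complex.normSq (v k)) / 4 := by rw [Finset.sum_div]
  linarith


/-- Summing a function of an extended family over the big index type. -/
lemma sum_extend {α β γ : Type*} [Fintype α] [Fintype β] [DecidableEq β]
    (e : α ↪ β) (c : α → γ) (z0 : γ) (F : γ → ℝ) (hF : F z0 = 0) :
    ∑ m : β, F (Function.extend e c (fun _ => z0) m) = ∑ i : α, F (c i) := by
  classical
  have h1 : ∑ m ∈ Finset.univ.image e, F (Function.extend e c (fun _ => z0) m)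
      = ∑ i : α, F (c i) := by
    rw [Finset.sum_image (fun a _ b _ h => e.injective h)]
    refine Finset.sum_congr rfl fun i _ => ?_
    rw [e.injective.extend_apply]
  rw [← h1]
  refine (Finset.sum_subset (Finset.subset_univ _) fun m _ hm => ?_).symm
  have hne : ¬ ∃ i, e i = m := by
    intro ⟨i, hi⟩
    exact hm (Finset.mem_image.mpr ⟨i, Finset.mem_univ i, hi⟩)
  rw [Function.extend_apply' _ _ _ hne, hF]

lemma card_pairs (n : ℕ) :
    2 * Fintype.card { pr : Fin n × Fin n // pr.1 < pr.2 } + n = n * n := by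
  classical
  have h := two_mul_sum_pairs (fun _ : Fin n => (1:ℝ))
  simp only [mul_one, one_pow, Finset.sum_const, Finset.card_univ, Fintype.card_fin,
    nsmul_eq_mul, mul_one] at h
  rw [Fintype.card_subtype]
  have : 2 * ((Finset.univ.filter (fun p : Fin n × Fin n => p.1 < p.2)).card : ℝ) + n
      = (n:ℝ) * n := by rw [h]; ring
  exact_mod_cast this

lemma card_idx_le (n : ℕ) (hn : 1 ≤ n) :
    Fintype.card (Idx n) + 1 ≤ Nat.choose (n + 3) 3 := by
  classical
  have hchoose : 6 * Nat.choose (n + 3) 3 = (n + 1) * (n + 2) * (n + 3) := by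
    have h1 := Nat.choose_mul_factorial_mul_factorial (show 3 ≤ n + 3 by omega)
    have h2 : n + 3 - 3 = n := by omega
    rw [h2] at h1
    have h3 : Nat.factorial 3 = 6 := rfl
    rw [h3] at h1
    have h4 : Nat.factorial (n + 3) = (n + 1) * (n + 2) * (n + 3) * Nat.factorial n := by
      rw [Nat.factorial_succ, Nat.factorial_succ, Nat.factorial_succ]
      ring
    rw [h4] at h1
    have h5 : (6 * Nat.choose (n + 3) 3) * Nat.factorial n
        = ((n + 1) * (n + 2) * (n + 3)) * Nat.factorial n := by
      calc (6 * Nat.choose (n + 3) 3) * Nat.factorial n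
          = Nat.choose (n + 3) 3 * 6 * Nat.factorial n := by ring
        _ = (n + 1) * (n + 2) * (n + 3) * Nat.factorial n := h1
        _ = ((n + 1) * (n + 2) * (n + 3)) * Nat.factorial n := by ring
    exact Nat.eq_of_mul_eq_mul_right (Nat.factorial_pos n) h5
  have hcard : Fintype.card (Idx n)
      = n * n + (n + (Fintype.card { pr : Fin n × Fin n // pr.1 < pr.2 } + 1)) := by
    simp [Idx, Fintype.card_sum, Fintype.card_prod, Fintype.card_fin]
  set c := Fintype.card { pr : Fin n × Fin n // pr.1 < pr.2 } with hc
  have hcc : 2 * c + n = n * n := card_pairs n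
  -- reduce to arithmetic
  have harith : 6 * (n * n + (n + (c + 1)) + 1) ≤ 6 * Nat.choose (n + 3) 3 := by
    rw [hchoose]
    obtain ⟨m, rfl⟩ : ∃ m, n = m + 1 := ⟨n - 1, by omega⟩
    have hcc' : 2 * c = (m + 1) * (m + 1) - (m + 1) := by omega
    have h2c : 2 * c = m * m + m := by
      have : (m + 1) * (m + 1) - (m + 1) = m * m + m := by ring_nf; omega
      omega
    nlinarith [Nat.zero_le (m * m * m), Nat.zero_le m, h2c]
  omega


lemma comp_totalDegree (n : ℕ) (σ : Fin n → ℝ) (i : Idx n) :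
    (comp n σ i).totalDegree ≤ 3 := by
  classical
  match i with
  | Sum.inl jk =>
    refine le_trans (MvPolynomial.totalDegree_add _ _) (max_le ?_ ?_)
    · refine le_trans (MvPolynomial.totalDegree_mul _ _) ?_
      rw [MvPolynomial.totalDegree_C, MvPolynomial.totalDegree_X]
      omega
    · refine le_trans (MvPolynomial.totalDegree_mul _ _) ?_
      have h1 : (MvPolynomial.C ((bR n σ jk.2 : ℂ)) *
          (MvPolynomial.X jk.2 : MvPolynomial (Fin n) ℂ) ^ 2).totalDegree ≤ 2 := by
        refine le_trans (MvPolynomial.totalDegree_mul _ _) ?_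
        rw [MvPolynomial.totalDegree_C, MvPolynomial.totalDegree_X_pow]
      rw [MvPolynomial.totalDegree_X]
      omega
  | Sum.inr (Sum.inl k) =>
    refine le_trans (MvPolynomial.totalDegree_mul _ _) ?_
    rw [MvPolynomial.totalDegree_C, MvPolynomial.totalDegree_X_pow]
    omega
  | Sum.inr (Sum.inr (Sum.inl pr)) =>
    refine le_trans (MvPolynomial.totalDegree_mul _ _) ?_
    rw [MvPolynomial.totalDegree_X, MvPolynomial.totalDegree_X]
    omega
  | Sum.inr (Sum.inr (Sum.inr _)) =>
    refine MvPolynomial.totalDegree_finsetSum_le fun k _ => ?_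
    refine le_trans (MvPolynomial.totalDegree_mul _ _) ?_
    rw [MvPolynomial.totalDegree_C, MvPolynomial.totalDegree_X_pow]
    omega

lemma comp_constantCoeff (n : ℕ) (σ : Fin n → ℝ) (i : Idx n) :
    MvPolynomial.constantCoeff (comp n σ i) = 0 := by
  classical
  match i with
  | Sum.inl jk => simp [comp]
  | Sum.inr (Sum.inl k) => simp [comp]
  | Sum.inr (Sum.inr (Sum.inl pr)) => simp [comp]
  | Sum.inr (Sum.inr (Sum.inr _)) =>
    show MvPolynomial.constantCoeff (qpoly n σ) = 0
    rw [qpoly, map_sum]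
    refine Finset.sum_eq_zero fun k _ => ?_
    simp


lemma sum_normSq_eq (n : ℕ) (z : EuclideanSpace ℂ (Fin n)) :
    ∑ k, Complex.normSq (z k) = ‖z‖ ^ 2 := by
  rw [EuclideanSpace.norm_eq, Real.sq_sqrt (Finset.sum_nonneg fun i _ => sq_nonneg _)]
  refine Finset.sum_congr rfl fun k _ => ?_
  rw [Complex.sq_norm]

lemma qe_abs_le (n : ℕ) (hn : 1 ≤ n) (σ : Fin n → ℝ) (hσ0 : ∀ k, 0 ≤ σ k)
    (hσε : ∀ k, σ k < 1 / (4 * n)) (v : Fin n → ℂ) :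
    ‖∑ k, (σ k : ℂ) * (v k) ^ 2‖ ≤ (∑ k, Complex.normSq (v k)) / 4 := by
  calc ‖∑ k, (σ k : ℂ) * (v k) ^ 2‖
      ≤ ∑ k, ‖(σ k : ℂ) * (v k) ^ 2‖ := norm_sum_le _ _
    _ ≤ ∑ k, Complex.normSq (v k) / 4 := by
        refine Finset.sum_le_sum fun k _ => ?_
        rw [norm_mul, Complex.norm_real, Real.norm_of_nonneg (hσ0 k), norm_pow, Complex.sq_norm]
        have h2 : σ k ≤ 1 / 4 := by
          have := hσε k
          have hn' : (1:ℝ) ≤ (n:ℝ) := by exact_mod_cast hn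
          have h3 : 1 / (4 * (n:ℝ)) ≤ 1 / 4 := by
            apply div_le_div_of_nonneg_left (by norm_num) (by norm_num) ?_
            linarith
          linarith
        have := mul_le_mul_of_nonneg_right h2 (Complex.normSq_nonneg (v k))
        linarith
    _ = (∑ k, Complex.normSq (v k)) / 4 := by rw [Finset.sum_div]

end CubicHelper


/-- For all small enough `σ₁ ≤ ⋯ ≤ σₙ`, the polynomial `1 + Σ σ_k z_k²` is the denominator of
a degree-(at most)-3 rational proper map of balls, written in lowest terms, taking the origin
to the origin.  One may take `N + 1` to be the dimension of the space of polynomials of degree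
at most `3` in `n` variables. -/
theorem exists_cubic_numerator (n : ℕ) (hn : 1 ≤ n) :
    ∃ (N : ℕ) (ε : ℝ), 0 < ε ∧ N + 1 = Nat.choose (n + 3) 3 ∧
      ∀ σ : Fin n → ℝ, Monotone σ → (∀ k, 0 ≤ σ k) → (∀ k, σ k < ε) →
        ∃ p : Fin N → MvPolynomial (Fin n) ℂ,
          (∀ j, (p j).totalDegree ≤ 3) ∧
          (∀ j, MvPolynomial.constantCoeff (p j) = 0) ∧
          (∀ h : MvPolynomial (Fin n) ℂ,
            h ∣ (1 + ∑ k : Fin n, MvPolynomial.C ((σ k : ℂ)) * (MvPolynomial.X k) ^ 2) →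
            (∀ j, h ∣ p j) → IsUnit h) ∧
          (∀ z : Cn n, ‖z‖ < 1 →
            evalPoly (1 + ∑ k : Fin n, MvPolynomial.C ((σ k : ℂ)) * (MvPolynomial.X k) ^ 2) z
              ≠ 0) ∧
          (∀ z : Cn n, ‖z‖ < 1 → sqNormP p z < Complex.normSq
            (evalPoly (1 + ∑ k : Fin n, MvPolynomial.C ((σ k : ℂ)) * (MvPolynomial.X k) ^ 2)
              z)) ∧
          (∀ z : Cn n, ‖z‖ = 1 → Complex.normSq
            (evalPoly (1 + ∑ k : Fin n, MvPolynomial.C ((σ k : ℂ)) * (MvPolynomial.X k) ^ 2)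
              z) - sqNormP p z = 0) := by
  classical
  have hnR : (0:ℝ) < (n:ℝ) := by exact_mod_cast hn
  refine ⟨Nat.choose (n + 3) 3 - 1, 1 / (4 * n), by positivity, ?_, ?_⟩
  · have h1 : 0 < Nat.choose (n + 3) 3 := Nat.choose_pos (by omega)
    omega
  intro σ hmono hσ0 hσε
  have hcard : Fintype.card (CubicHelper.Idx n)
      ≤ Fintype.card (Fin (Nat.choose (n + 3) 3 - 1)) := by
    rw [Fintype.card_fin]
    have := CubicHelper.card_idx_le n hn
    omega
  obtain ⟨e⟩ := Function.Embedding.nonempty_of_card_le hcard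
  refine ⟨Function.extend e (CubicHelper.comp n σ) (fun _ => 0), ?_, ?_, ?_, ?_, ?_, ?_⟩
  · -- total degree
    intro j
    by_cases hj : ∃ i, e i = j
    · obtain ⟨i, rfl⟩ := hj
      rw [e.injective.extend_apply]
      exact CubicHelper.comp_totalDegree n σ i
    · rw [Function.extend_apply' _ _ _ hj]
      simp
  · -- constant coefficient
    intro j
    by_cases hj : ∃ i, e i = j
    · obtain ⟨i, rfl⟩ := hj
      rw [e.injective.extend_apply]
      exact CubicHelper.comp_constantCoeff n σ i
    · rw [Function.extend_apply' _ _ _ hj]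
      simp
  · -- lowest terms
    intro h hg hdvd
    have h1 := hdvd (e (Sum.inr (Sum.inr (Sum.inr ()))))
    rw [e.injective.extend_apply] at h1
    have h2 : h ∣ CubicHelper.qpoly n σ := h1
    have h3 : h ∣ (1 : MvPolynomial (Fin n) ℂ) := by
      have h4 := dvd_sub hg h2
      have h5 : (1 + ∑ k : Fin n, MvPolynomial.C ((σ k : ℂ)) * (MvPolynomial.X k) ^ 2)
          - CubicHelper.qpoly n σ = 1 := by
        rw [CubicHelper.qpoly]; ring
      rwa [h5] at h4
    exact isUnit_of_dvd_one h3
  · -- denominator nonzero on the ball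
    intro z hz
    have hs : ∑ k, Complex.normSq (z k) = ‖z‖ ^ 2 := CubicHelper.sum_normSq_eq n z
    have hs1 : ∑ k, Complex.normSq (z k) < 1 := by
      rw [hs]
      have := norm_nonneg z
      nlinarith
    intro h0
    have h0' : MvPolynomial.eval (fun i => z i)
        (1 + ∑ k : Fin n, MvPolynomial.C ((σ k : ℂ)) * (MvPolynomial.X k) ^ 2) = 0 := h0
    rw [map_add, map_one] at h0'
    have hq0 : MvPolynomial.eval (fun i => z i)
        (∑ k : Fin n, MvPolynomial.C ((σ k : ℂ)) * (MvPolynomial.X k) ^ 2)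
        = ∑ k, (σ k : ℂ) * (z k) ^ 2 := CubicHelper.eval_qpoly n σ (fun i => z i)
    rw [hq0] at h0'
    have hqe : (∑ k, (σ k : ℂ) * (z k) ^ 2) = -1 := by
      linear_combination h0'
    have habs : ‖∑ k, (σ k : ℂ) * (z k) ^ 2‖ = 1 := by
      rw [hqe]; simp
    have hle := CubicHelper.qe_abs_le n hn σ hσ0 hσε (fun i => z i)
    rw [habs] at hle
    linarith
  · -- strict inequality inside the ball
    intro z hz
    have hs : ∑ k, Complex.normSq (z k) = ‖z‖ ^ 2 := CubicHelper.sum_normSq_eq n z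
    have hs1 : ∑ k, Complex.normSq (z k) < 1 := by
      rw [hs]
      have := norm_nonneg z
      nlinarith
    have hsum : sqNormP (Function.extend e (CubicHelper.comp n σ) (fun _ => 0)) z
        = ∑ i : CubicHelper.Idx n,
            Complex.normSq (MvPolynomial.eval (fun i => z i) (CubicHelper.comp n σ i)) := by
      simp only [sqNormP, evalPoly]
      exact CubicHelper.sum_extend e (CubicHelper.comp n σ) 0
        (fun P => Complex.normSq (MvPolynomial.eval (fun i => z i) P)) (by simp)
    have hkey := CubicHelper.key_identity n hn σ hσ0 hσε (fun i => z i)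
    have hH := CubicHelper.H_ge_one n hn σ hσ0 hσε (fun i => z i)
    have hpos : 0 < (1 - ∑ k, Complex.normSq (z k)) *
        (1 + (∑ k, Complex.normSq (z k)) / 2
          + 2 * (∑ k, σ k * ((z k) ^ 2).re)
          + ∑ k, 2 * n * (σ k) ^ 2 * (Complex.normSq (z k)) ^ 2) := by
      apply mul_pos (by linarith)
      linarith
    rw [hsum]
    have : evalPoly (1 + ∑ k : Fin n, MvPolynomial.C ((σ k : ℂ)) * (MvPolynomial.X k) ^ 2) z
        = MvPolynomial.eval (fun i => z i)
            (1 + ∑ k : Fin n, MvPolynomial.C ((σ k : ℂ)) * (MvPolynomial.X k) ^ 2) := rfl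
    rw [this]
    have hq : (1 : MvPolynomial (Fin n) ℂ)
        + ∑ k : Fin n, MvPolynomial.C ((σ k : ℂ)) * (MvPolynomial.X k) ^ 2
        = 1 + CubicHelper.qpoly n σ := rfl
    rw [hq]
    linarith [hkey, hpos]
  · -- equality on the sphere
    intro z hz
    have hs : ∑ k, Complex.normSq (z k) = 1 := by
      rw [CubicHelper.sum_normSq_eq n z, hz]; norm_num
    have hsum : sqNormP (Function.extend e (CubicHelper.comp n σ) (fun _ => 0)) z
        = ∑ i : CubicHelper.Idx n,
            Complex.normSq (MvPolynomial.eval (fun i => z i) (CubicHelper.comp n σ i)) := by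
      simp only [sqNormP, evalPoly]
      exact CubicHelper.sum_extend e (CubicHelper.comp n σ) 0
        (fun P => Complex.normSq (MvPolynomial.eval (fun i => z i) P)) (by simp)
    have hkey := CubicHelper.key_identity n hn σ hσ0 hσε (fun i => z i)
    rw [hsum]
    have hq : (1 : MvPolynomial (Fin n) ℂ)
        + ∑ k : Fin n, MvPolynomial.C ((σ k : ℂ)) * (MvPolynomial.X k) ^ 2
        = 1 + CubicHelper.qpoly n σ := rfl
    have : evalPoly (1 + ∑ k : Fin n, MvPolynomial.C ((σ k : ℂ)) * (MvPolynomial.X k) ^ 2) z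
        = MvPolynomial.eval (fun i => z i)
            (1 + ∑ k : Fin n, MvPolynomial.C ((σ k : ℂ)) * (MvPolynomial.X k) ^ 2) := rfl
    rw [this, hq, hkey, hs]
    ring
end
end

section
/- Let f = p/g : 𝔹_n → 𝔹_N be a rational proper map of balls of degree d written in lowest terms with g(0) = 1 and maximal embedding dimension for degree d, i.e., the functions p₁, …, p_N, g are linearly independent over ℂ and N + 1 equals the dimension of the space of polynomials of degree at most d in n variables (N + 1 = binom(n+d, d)). Let r(z,z̄) = |g(z)|² − ‖p(z)‖². Then at least one of the following holds: (i) there exist γ > 0 and a polynomial map P : ℂⁿ → ℂᴺ with r(z,z̄) = γ(1 − ‖P(z)‖²) for all z (so a linear fractional change of target makes f a polynomial proper map to 𝔹_N); (ii) there exist γ > 0, a polynomial G : ℂⁿ → ℂ, and a polynomial map P : ℂⁿ → ℂᴺ⁻¹ with r(z,z̄) = γ(|G(z)|² − 1 − ‖P(z)‖²) for all z (so f is polynomial into the generalized ball 𝔹_{1,N−1}); (iii) there exist a polynomial G : ℂⁿ → ℂ and a polynomial map P : ℂⁿ → ℂᴺ⁻¹ with r(z,z̄) = Re G(z) − ‖P(z)‖²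 for all z (so f is polynomial into the Heisenberg model ℍ_N of the ball). -/
open Metric MvPolynomial
open scoped InnerProductSpace ComplexOrder

noncomputable section

/-! ### Auxiliary lemmas -/

/-- Transferring the "slack variable" equivalence for stars and bars. -/
def equivSlack (n d : ℕ) :
    {f : Fin n → ℕ // ∑ i, f i ≤ d} ≃ {P : Fin (n+1) → ℕ // ∑ i, P i = d} where
  toFun f := ⟨Fin.cons (d - ∑ i, f.1 i) f.1, by
    rw [Fin.sum_cons]
    have := f.2; omega⟩
  invFun P := ⟨Fin.tail P.1, by
    have h := P.2
    rw [Fin.sum_univ_succ] at h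
    simp only [Fin.tail]
    omega⟩
  left_inv f := by
    ext i
    simp [Fin.tail_cons]
  right_inv P := by
    ext i
    refine Fin.cases ?_ (fun k => ?_) i
    · have h := P.2
      rw [Fin.sum_univ_succ] at h
      simp only [Fin.cons_zero, Fin.tail]
      omega
    · simp [Fin.tail]

def equivDegLE (n d : ℕ) :
    {s : Fin n →₀ ℕ // (s.sum fun _ e => e) ≤ d} ≃ Sym (Fin (n+1)) d :=
  ((Finsupp.equivFunOnFinite.subtypeEquiv (by
      intro s
      rw [Finsupp.sum_fintype]
      · rfl
      · intro; rfl)).trans ((equivSlack n d).trans (Sym.equivNatSumOfFintype (Fin (n+1)) d).symm))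

lemma card_degLE (n d : ℕ) :
    Nat.card {s : Fin n →₀ ℕ // (s.sum fun _ e => e) ≤ d} = (n + d).choose d := by
  rw [Nat.card_congr (equivDegLE n d), Nat.card_eq_fintype_card, Sym.card_sym_eq_choose]
  simp

lemma exists_combo {n N d : ℕ} (p : Fin N → MvPolynomial (Fin n) ℂ) (g : MvPolynomial (Fin n) ℂ)
    (hdegp : ∀ j, (p j).totalDegree ≤ d) (hdegg : g.totalDegree ≤ d)
    (hli : LinearIndependent ℂ (Sum.elim p fun _ : Unit => g))
    (hmax : N + 1 = Nat.choose (n + d) d) :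
    ∃ (c : Fin N → ℂ) (c0 : ℂ), (∑ j, c j • p j) + c0 • g = 1 := by
  set V := restrictTotalDegree (Fin n) ℂ d with hV
  have hfr : Module.finrank ℂ V = (n + d).choose d := by
    letI : Fintype {s : Fin n →₀ ℕ | (s.sum fun _ e => e) ≤ d} :=
      Fintype.ofEquiv _ (equivDegLE n d).symm
    rw [show V = restrictSupport ℂ {s : Fin n →₀ ℕ | (s.sum fun _ e => e) ≤ d} from rfl,
      Module.finrank_eq_card_basis (basisRestrictSupport ℂ _), ← Nat.card_eq_fintype_card]
    exact card_degLE n d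
  have hmem : ∀ i : Fin N ⊕ Unit, Sum.elim p (fun _ => g) i ∈ V := by
    intro i
    cases i with
    | inl j => exact (mem_restrictTotalDegree _ _ _).mpr (hdegp j)
    | inr u => exact (mem_restrictTotalDegree _ _ _).mpr hdegg
  set w : Fin N ⊕ Unit → V := fun i => ⟨Sum.elim p (fun _ => g) i, hmem i⟩ with hw
  have hwi : LinearIndependent ℂ w := by
    apply LinearIndependent.of_comp V.subtype
    have : V.subtype ∘ w = Sum.elim p fun _ : Unit => g := by
      funext i; cases i <;> rfl
    rw [this]; exact hli
  have hsp : Submodule.span ℂ (Set.range w) = ⊤ := by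
    apply hwi.span_eq_top_of_card_eq_finrank
    simp [hfr, ← hmax]
  have h1 : (1 : MvPolynomial (Fin n) ℂ) ∈ V :=
    (mem_restrictTotalDegree _ _ _).mpr (by simp [totalDegree_one])
  have hmem1 : (⟨1, h1⟩ : V) ∈ Submodule.span ℂ (Set.range w) := hsp ▸ Submodule.mem_top
  rw [Submodule.mem_span_range_iff_exists_fun ℂ] at hmem1
  obtain ⟨cc, hcc⟩ := hmem1
  refine ⟨fun j => cc (Sum.inl j), cc (Sum.inr ()), ?_⟩
  have h2 := congrArg Subtype.val hcc
  push_cast at h2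
  rw [Fintype.sum_sum_type] at h2
  simpa [hw] using h2

lemma parseval_decomp {M : ℕ} (c : Fin (M+1) → ℂ) (hc : c ≠ 0) :
    ∃ v : Fin M → Fin (M+1) → ℂ,
      ∀ a : Fin (M+1) → ℂ,
        ∑ j, Complex.normSq (a j)
          = Complex.normSq (∑ j, c j * a j) / (∑ j, Complex.normSq (c j))
            + ∑ k, Complex.normSq (∑ j, (starRingEnd ℂ) (v k j) * a j) := by
  set cv : EuclideanSpace ℂ (Fin (M+1)) := WithLp.toLp 2 (fun j => (starRingEnd ℂ) (c j)) with hcv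
  have hcv0 : cv ≠ 0 := by
    intro h
    apply hc
    funext j
    exact (map_eq_zero (starRingEnd ℂ)).mp (congrArg (fun x : EuclideanSpace ℂ (Fin (M+1)) => x j) h)
  have hnrm : (0:ℝ) < ‖cv‖ := norm_pos_iff.mpr hcv0
  set u : EuclideanSpace ℂ (Fin (M+1)) := ‖cv‖⁻¹ • cv with hu
  have hun : ‖u‖ = 1 := norm_smul_inv_norm hcv0
  have hcard : Module.finrank ℂ (EuclideanSpace ℂ (Fin (M+1)))
      = Fintype.card (Fin (M+1)) := by
    simp [finrank_euclideanSpace_fin]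
  have horth : Orthonormal ℂ (Set.restrict {0} (fun _ : Fin (M+1) => u)) := by
    constructor
    · intro i; exact hun
    · intro i j hij
      exact absurd (Subtype.ext (i.2.trans j.2.symm)) hij
  obtain ⟨b, hb⟩ := horth.exists_orthonormalBasis_extension_of_card_eq hcard
  have hb0 : b 0 = u := hb 0 rfl
  refine ⟨fun k j => b k.succ j, ?_⟩
  intro a
  set A : EuclideanSpace ℂ (Fin (M+1)) := WithLp.toLp 2 a with hA
  have key := b.sum_inner_mul_inner A A
  have hconj : ∀ x : EuclideanSpace ℂ (Fin (M+1)),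
      ⟪A, x⟫_ℂ * ⟪x, A⟫_ℂ = (Complex.normSq ⟪x, A⟫_ℂ : ℂ) := by
    intro x
    rw [← inner_conj_symm x A, Complex.normSq_conj, Complex.mul_conj]
  simp only [hconj] at key
  have hAA : ⟪A, A⟫_ℂ = ((∑ j, Complex.normSq (a j) : ℝ) : ℂ) := by
    have h0 : ⟪A, A⟫_ℂ = ∑ j, (starRingEnd ℂ) (a j) * a j := by
      have g : ∀ x : EuclideanSpace ℂ (Fin (M+1)), ⟪x, A⟫_ℂ = ∑ j, (starRingEnd ℂ) (x j) * a j :=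
        fun x => by rw [PiLp.inner_apply]; refine Finset.sum_congr rfl fun j _ => ?_; simp [hA, mul_comm]
      exact g A
    rw [h0, show ((∑ j, Complex.normSq (a j) : ℝ) : ℂ)
        = ∑ j, (Complex.normSq (a j) : ℂ) by norm_cast]
    exact Finset.sum_congr rfl fun j _ => Complex.normSq_eq_conj_mul_self.symm
  rw [hAA, Fin.sum_univ_succ, hb0] at key
  have hinner0 : ⟪u, A⟫_ℂ = ((‖cv‖⁻¹ : ℝ) : ℂ) * ∑ j, c j * a j := by
    have hsm : u = ((‖cv‖⁻¹ : ℝ) : ℂ) • cv := by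
      rw [hu]; norm_cast
    rw [hsm, inner_smul_left, Complex.conj_ofReal]
    congr 1
    have h0 : ⟪cv, A⟫_ℂ = ∑ j, (starRingEnd ℂ) ((starRingEnd ℂ) (c j)) * a j := by rw [PiLp.inner_apply]; refine Finset.sum_congr rfl fun j _ => ?_; simp [hA, hcv, mul_comm]
    rw [h0]
    refine Finset.sum_congr rfl fun j _ => ?_
    rw [Complex.conj_conj]
  have hnormSq0 : Complex.normSq ⟪u, A⟫_ℂ
      = Complex.normSq (∑ j, c j * a j) / (∑ j, Complex.normSq (c j)) := by
    rw [hinner0, Complex.normSq_mul, Complex.normSq_ofReal]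
    have h2 : ‖cv‖^2 = ∑ j, Complex.normSq (c j) := by
      rw [EuclideanSpace.norm_eq, Real.sq_sqrt (by positivity)]
      refine Finset.sum_congr rfl fun j _ => ?_
      rw [hcv]
      simp [Complex.sq_norm, Complex.normSq_conj]
    rw [← h2, pow_two, div_eq_mul_inv, mul_inv]
    ring
  have keyR : Complex.normSq ⟪u, A⟫_ℂ + ∑ i : Fin M, Complex.normSq ⟪b i.succ, A⟫_ℂ
      = ∑ j, Complex.normSq (a j) := by exact_mod_cast key
  rw [show (∑ j, Complex.normSq (a j)) = ∑ j, Complex.normSq (A j) from rfl] at keyR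
  rw [← keyR, hnormSq0]
  congr 1
  refine Finset.sum_congr rfl fun k _ => ?_
  congr 1
  rw [PiLp.inner_apply]; refine Finset.sum_congr rfl fun j _ => ?_; simp [hA, mul_comm]

lemma normSq_one_sub (c0 w : ℂ) :
    Complex.normSq (1 - c0 * w)
      = 1 - 2 * (c0 * w).re + Complex.normSq c0 * Complex.normSq w := by
  rw [Complex.normSq_sub, Complex.normSq_one, Complex.normSq_mul, one_mul, Complex.conj_re]
  ring

lemma scalar_iii' (t n1 x S : ℝ) (ht : t ≠ 0) :
    n1 - ((1 - 2*x + t*n1)/t + S) = (2*x/t - t⁻¹) - S := by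
  field_simp
  ring

lemma scalar_ii' (t nc0 n1 x S e : ℝ) (ht : t ≠ 0) (he : e = t - nc0) (he0 : e ≠ 0) :
    n1 - ((1 - 2*x + nc0*n1)/t + S)
      = e⁻¹ * ((e^2/t) * (n1 + nc0*(e⁻¹)^2 + 2*(e⁻¹*x)) - 1 - e*S) := by
  subst he
  field_simp
  ring

lemma scalar_i' (t nc0 n1 x S e : ℝ) (ht : t ≠ 0) (he : e = t - nc0) (he0 : e ≠ 0) :
    n1 - ((1 - 2*x + nc0*n1)/t + S)
      = (-e)⁻¹ * (1 - ((e^2/t)*(n1 + nc0*(e⁻¹)^2 + 2*(e⁻¹*x)) + (-e)*S)) := by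
  rw [inv_neg]
  subst he
  field_simp
  ring

lemma sqNormP_cons {n M : ℕ} (H : MvPolynomial (Fin n) ℂ)
    (T : Fin M → MvPolynomial (Fin n) ℂ) (z : Cn n) :
    sqNormP (Fin.cons H T : Fin (M+1) → MvPolynomial (Fin n) ℂ) z
      = Complex.normSq (evalPoly H z) + sqNormP T z := by
  rw [sqNormP, Fin.sum_univ_succ]
  rfl

lemma sqNormP_scale {n M : ℕ} (a : ℂ) (R : Fin M → MvPolynomial (Fin n) ℂ) (z : Cn n) :
    sqNormP (fun k => MvPolynomial.C a * R k) z
      = Complex.normSq a * ∑ k, Complex.normSq (evalPoly (R k) z) := by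
  rw [sqNormP, Finset.mul_sum]
  refine Finset.sum_congr rfl fun k _ => ?_
  rw [show evalPoly (MvPolynomial.C a * R k) z = a * evalPoly (R k) z by
    simp [evalPoly, eval_mul, eval_C]]
  rw [Complex.normSq_mul]

theorem maximal_embedding_dimension_polynomial {n N d : ℕ}
    (F : RatProperBallMap n N d)
    (hg0 : MvPolynomial.constantCoeff F.g = 1)
    (hli : LinearIndependent ℂ (Sum.elim F.p fun _ : Unit => F.g))
    (hmax : N + 1 = Nat.choose (n + d) d) :
    -- (i) polynomial map into the ball
    (∃ γ : ℝ, 0 < γ ∧ ∃ P : Fin N → MvPolynomial (Fin n) ℂ,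
      ∀ z : Cn n, Complex.normSq (evalPoly F.g z) - sqNormP F.p z
        = γ * (1 - sqNormP P z)) ∨
    -- (ii) polynomial map into the generalized ball 𝔹_{1,N-1}
    (∃ γ : ℝ, 0 < γ ∧ ∃ (G : MvPolynomial (Fin n) ℂ) (P : Fin (N - 1) → MvPolynomial (Fin n) ℂ),
      ∀ z : Cn n, Complex.normSq (evalPoly F.g z) - sqNormP F.p z
        = γ * (Complex.normSq (evalPoly G z) - 1 - sqNormP P z)) ∨
    -- (iii) polynomial map into the Heisenberg model ℍ_N
    (∃ (G : MvPolynomial (Fin n) ℂ) (P : Fin (N - 1) → MvPolynomial (Fin n) ℂ),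
      ∀ z : Cn n, Complex.normSq (evalPoly F.g z) - sqNormP F.p z
        = (evalPoly G z).re - sqNormP P z) := by
  classical
  have hdeq : max (Finset.univ.sup fun j => (F.p j).totalDegree) F.g.totalDegree = d :=
    F.deg_eq.symm
  have hdegp : ∀ j, (F.p j).totalDegree ≤ d := by
    intro j
    have h1 : (F.p j).totalDegree ≤ (Finset.univ.sup fun j => (F.p j).totalDegree) :=
      Finset.le_sup (f := fun j => (F.p j).totalDegree) (Finset.mem_univ j)
    omega
  have hdegg : F.g.totalDegree ≤ d := by omega
  obtain ⟨c, c0, hsum⟩ := exists_combo F.p F.g hdegp hdegg hli hmax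
  by_cases hc : c = 0
  · -- the denominator is the constant 1; polynomial proper map, case (i)
    have h0 : c0 • F.g = 1 := by
      have hz : (∑ j, c j • F.p j) = 0 := by
        simp [hc]
      rw [hz, zero_add] at hsum
      exact hsum
    have hc0 : c0 = 1 := by
      have h1 := congrArg MvPolynomial.constantCoeff h0
      simpa [hg0] using h1
    have hg1 : F.g = 1 := by
      rw [hc0, one_smul] at h0; exact h0
    left
    refine ⟨1, one_pos, F.p, fun z => ?_⟩
    rw [hg1]
    simp [evalPoly]
  · -- c ≠ 0
    obtain ⟨j0, hj0⟩ := Function.ne_iff.mp hc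
    obtain ⟨M, rfl⟩ : ∃ M, N = M + 1 := ⟨N - 1, by have := j0.pos; omega⟩
    suffices hBIG :
        (∃ γ : ℝ, 0 < γ ∧ ∃ P : Fin (M+1) → MvPolynomial (Fin n) ℂ,
          ∀ z : Cn n, Complex.normSq (evalPoly F.g z) - sqNormP F.p z
            = γ * (1 - sqNormP P z)) ∨
        (∃ γ : ℝ, 0 < γ ∧ ∃ (G : MvPolynomial (Fin n) ℂ)
            (P : Fin M → MvPolynomial (Fin n) ℂ),
          ∀ z : Cn n, Complex.normSq (evalPoly F.g z) - sqNormP F.p z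
            = γ * (Complex.normSq (evalPoly G z) - 1 - sqNormP P z)) ∨
        (∃ (G : MvPolynomial (Fin n) ℂ) (P : Fin M → MvPolynomial (Fin n) ℂ),
          ∀ z : Cn n, Complex.normSq (evalPoly F.g z) - sqNormP F.p z
            = (evalPoly G z).re - sqNormP P z) by
      exact hBIG
    obtain ⟨v, hv⟩ := parseval_decomp c hc
    set t : ℝ := ∑ j, Complex.normSq (c j) with ht
    have ht0 : 0 < t := by
      exact Finset.sum_pos' (fun i _ => Complex.normSq_nonneg _)
        ⟨j0, Finset.mem_univ j0, Complex.normSq_pos.mpr hj0⟩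
    set Q : Fin M → MvPolynomial (Fin n) ℂ :=
      fun k => ∑ j, (starRingEnd ℂ) (v k j) • F.p j with hQdef
    have hQz : ∀ (k : Fin M) (z : Cn n),
        evalPoly (Q k) z = ∑ j, (starRingEnd ℂ) (v k j) * evalPoly (F.p j) z := by
      intro k z
      simp [hQdef, evalPoly, map_sum, MvPolynomial.smul_eval]
    have heval : ∀ z : Cn n,
        (∑ j, c j * evalPoly (F.p j) z) = 1 - c0 * evalPoly F.g z := by
      intro z
      have h1 := congrArg (fun q => evalPoly q z) hsum
      simp only [evalPoly, map_add, map_sum, MvPolynomial.smul_eval, map_one] at h1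
      simp only [evalPoly]
      linear_combination h1
    have hkey : ∀ z : Cn n, sqNormP F.p z
        = Complex.normSq (1 - c0 * evalPoly F.g z) / t
          + ∑ k, Complex.normSq (evalPoly (Q k) z) := by
      intro z
      have h1 := hv (fun j => evalPoly (F.p j) z)
      rw [heval z] at h1
      rw [sqNormP]
      rw [h1]
      congr 1
      exact Finset.sum_congr rfl fun k _ => by rw [hQz]
    set e : ℝ := t - Complex.normSq c0 with he
    rcases lt_trichotomy e 0 with hneg | hzero | hpos
    · -- case (i): e < 0
      left
      set w0 : ℂ := ((e⁻¹ : ℝ) : ℂ) * (starRingEnd ℂ) c0 with hw0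
      have hγpos : (0:ℝ) < (-e)⁻¹ := by
        have : (0:ℝ) < -e := by linarith
        positivity
      refine ⟨(-e)⁻¹, hγpos,
        Fin.cons (MvPolynomial.C ((e / Real.sqrt t : ℝ) : ℂ) * (F.g + MvPolynomial.C w0))
          (fun k => MvPolynomial.C ((Real.sqrt (-e) : ℝ) : ℂ) * Q k), fun z => ?_⟩
      have hk := hkey z
      have hre : (evalPoly F.g z * (starRingEnd ℂ) w0).re
          = e⁻¹ * (c0 * evalPoly F.g z).re := by
        rw [hw0, map_mul, Complex.conj_conj, Complex.conj_ofReal]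
        rw [show evalPoly F.g z * (((e⁻¹:ℝ):ℂ) * c0)
            = ((e⁻¹:ℝ):ℂ) * (c0 * evalPoly F.g z) by ring, Complex.re_ofReal_mul]
      have hnw0 : Complex.normSq w0 = Complex.normSq c0 * (e⁻¹)^2 := by
        rw [hw0, Complex.normSq_mul, Complex.normSq_ofReal, Complex.normSq_conj]
        ring
      have h3 : Complex.normSq (evalPoly
            (MvPolynomial.C ((e / Real.sqrt t : ℝ) : ℂ) * (F.g + MvPolynomial.C w0)) z)
          = (e^2/t) * (Complex.normSq (evalPoly F.g z)
              + Complex.normSq c0 * (e⁻¹)^2 + 2 * (e⁻¹ * (c0 * evalPoly F.g z).re)) := by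
        rw [show evalPoly (MvPolynomial.C ((e / Real.sqrt t : ℝ) : ℂ)
              * (F.g + MvPolynomial.C w0)) z
            = ((e / Real.sqrt t : ℝ) : ℂ) * (evalPoly F.g z + w0) by
          simp [evalPoly, eval_mul, eval_C, map_add]]
        rw [Complex.normSq_mul, Complex.normSq_ofReal, Complex.normSq_add, hre, hnw0]
        rw [show (e / Real.sqrt t) * (e / Real.sqrt t) = e^2 / t by
          rw [div_mul_div_comm, Real.mul_self_sqrt ht0.le]; ring]
      have h4 : sqNormP (Fin.cons
            (MvPolynomial.C ((e / Real.sqrt t : ℝ) : ℂ) * (F.g + MvPolynomial.C w0))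
            (fun k => MvPolynomial.C ((Real.sqrt (-e) : ℝ) : ℂ) * Q k)) z
          = (e^2/t) * (Complex.normSq (evalPoly F.g z)
              + Complex.normSq c0 * (e⁻¹)^2 + 2 * (e⁻¹ * (c0 * evalPoly F.g z).re))
            + (-e) * ∑ k, Complex.normSq (evalPoly (Q k) z) := by
        rw [sqNormP_cons, h3, sqNormP_scale, Complex.normSq_ofReal,
          Real.mul_self_sqrt (by linarith : (0:ℝ) ≤ -e)]
      rw [hk, h4, normSq_one_sub]
      linear_combination scalar_i' t (Complex.normSq c0) (Complex.normSq (evalPoly F.g z))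
        ((c0 * evalPoly F.g z).re) (∑ k, Complex.normSq (evalPoly (Q k) z)) e
        ht0.ne' he hneg.ne
    · -- case (iii): e = 0
      right; right
      have hnct : Complex.normSq c0 = t := by
        rw [he] at hzero; linarith
      refine ⟨((2 : ℂ) * c0 / (t : ℂ)) • F.g - MvPolynomial.C ((t : ℂ))⁻¹, Q, fun z => ?_⟩
      have hk := hkey z
      have hGre : (evalPoly (((2 : ℂ) * c0 / (t : ℂ)) • F.g - MvPolynomial.C ((t : ℂ))⁻¹) z).re
          = 2 * (c0 * evalPoly F.g z).re / t - t⁻¹ := by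
        rw [show evalPoly (((2 : ℂ) * c0 / (t : ℂ)) • F.g - MvPolynomial.C ((t : ℂ))⁻¹) z
            = (2 * c0 / (t:ℂ)) * evalPoly F.g z - ((t:ℂ))⁻¹ by
          simp [evalPoly, map_sub, MvPolynomial.smul_eval, eval_C]]
        rw [Complex.sub_re]
        congr 1
        · rw [show (2 * c0 / (t:ℂ)) * evalPoly F.g z
              = (2 * (c0 * evalPoly F.g z)) / (t:ℂ) by ring]
          rw [Complex.div_ofReal_re]
          rw [show (2 * (c0 * evalPoly F.g z)).re = 2 * (c0 * evalPoly F.g z).re by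
            simp [Complex.mul_re]]
        · rw [← Complex.ofReal_inv, Complex.ofReal_re]
      have hQS : sqNormP Q z = ∑ k, Complex.normSq (evalPoly (Q k) z) := rfl
      rw [hk, hGre, hQS, normSq_one_sub, hnct]
      linear_combination scalar_iii' t (Complex.normSq (evalPoly F.g z))
        ((c0 * evalPoly F.g z).re) (∑ k, Complex.normSq (evalPoly (Q k) z)) ht0.ne'
    · -- case (ii): e > 0
      right; left
      set w0 : ℂ := ((e⁻¹ : ℝ) : ℂ) * (starRingEnd ℂ) c0 with hw0
      refine ⟨e⁻¹, by positivity,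
        MvPolynomial.C ((e / Real.sqrt t : ℝ) : ℂ) * (F.g + MvPolynomial.C w0),
        fun k => MvPolynomial.C ((Real.sqrt e : ℝ) : ℂ) * Q k, fun z => ?_⟩
      have hk := hkey z
      have hre : (evalPoly F.g z * (starRingEnd ℂ) w0).re
          = e⁻¹ * (c0 * evalPoly F.g z).re := by
        rw [hw0, map_mul, Complex.conj_conj, Complex.conj_ofReal]
        rw [show evalPoly F.g z * (((e⁻¹:ℝ):ℂ) * c0)
            = ((e⁻¹:ℝ):ℂ) * (c0 * evalPoly F.g z) by ring, Complex.re_ofReal_mul]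
      have hnw0 : Complex.normSq w0 = Complex.normSq c0 * (e⁻¹)^2 := by
        rw [hw0, Complex.normSq_mul, Complex.normSq_ofReal, Complex.normSq_conj]
        ring
      have h3 : Complex.normSq (evalPoly
            (MvPolynomial.C ((e / Real.sqrt t : ℝ) : ℂ) * (F.g + MvPolynomial.C w0)) z)
          = (e^2/t) * (Complex.normSq (evalPoly F.g z)
              + Complex.normSq c0 * (e⁻¹)^2 + 2 * (e⁻¹ * (c0 * evalPoly F.g z).re)) := by
        rw [show evalPoly (MvPolynomial.C ((e / Real.sqrt t : ℝ) : ℂ)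
              * (F.g + MvPolynomial.C w0)) z
            = ((e / Real.sqrt t : ℝ) : ℂ) * (evalPoly F.g z + w0) by
          simp [evalPoly, eval_mul, eval_C, map_add]]
        rw [Complex.normSq_mul, Complex.normSq_ofReal, Complex.normSq_add, hre, hnw0]
        rw [show (e / Real.sqrt t) * (e / Real.sqrt t) = e^2 / t by
          rw [div_mul_div_comm, Real.mul_self_sqrt ht0.le]; ring]
      have h4 : sqNormP (fun k => MvPolynomial.C ((Real.sqrt e : ℝ) : ℂ) * Q k) z
          = e * ∑ k, Complex.normSq (evalPoly (Q k) z) := by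
        rw [sqNormP_scale, Complex.normSq_ofReal, Real.mul_self_sqrt hpos.le]
      rw [hk, h3, h4, normSq_one_sub]
      linear_combination scalar_ii' t (Complex.normSq c0) (Complex.normSq (evalPoly F.g z))
        ((c0 * evalPoly F.g z).re) (∑ k, Complex.normSq (evalPoly (Q k) z)) e
        ht0.ne' he hpos.ne'
end
end
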